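/- arXiv:2103.13675 — 4 statements merged into one kernel-verified Lean document; each statement's English description precedes it below -/
import Mathlib

section
/- Let 0 < b < b̄ and let O = {(R,Z) ∈ ℝ² : R > 0 and bR < Z < b̄R}. Suppose P : O → ℝ is continuously differentiable, and define H(R,Z) = R ∫₁^R P(s, sZ/R) s⁻² ds for (R,Z) ∈ O. Then H is continuously differentiable on O and satisfies the Euler-type identity R·∂_R H(R,Z) + Z·∂_Z H(R,Z) − H(R,Z) = P(R,Z) for every (R,Z) ∈ O. -/
open Set Metric MeasureTheory intervalIntegral Asymptotics Filter

lemma abs_sub_le_of_mem_uIcc' {s x₀ x : ℝ} (hs : s ∈ Set.uIcc x₀ x) : |s - x₀| ≤ |x - x₀| := by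
  rcases le_total x₀ x with h | h
  · rw [Set.uIcc_of_le h] at hs
    rw [abs_of_nonneg (by linarith [hs.1]), abs_of_nonneg (by linarith)]
    linarith [hs.2]
  · rw [Set.uIcc_of_ge h] at hs
    rw [abs_of_nonpos (by linarith [hs.2]), abs_of_nonpos (by linarith)]
    linarith [hs.1]

set_option maxHeartbeats 1000000 in
lemma continuousAt_parametric_primitive
    {h : ℝ × ℝ → ℝ} {t₁ t₂ : ℝ}
    (hh : ContinuousOn h (Set.Ioi (0:ℝ) ×ˢ Set.Ioo t₁ t₂))
    {q₀ : ℝ × ℝ} (hq : q₀ ∈ Set.Ioi (0:ℝ) ×ˢ Set.Ioo t₁ t₂) :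
    ContinuousAt (fun q : ℝ × ℝ => ∫ s in (1:ℝ)..q.1, h (s, q.2)) q₀ := by
  obtain ⟨hx0, hu1, hu2⟩ := hq
  simp only [Set.mem_Ioi] at hx0
  set x₀ := q₀.1 with hx₀def
  set u₀ := q₀.2 with hu₀def
  have hmin : 0 < min 1 x₀ := lt_min one_pos hx0
  set a : ℝ := min 1 x₀ / 2 with hadef
  set c : ℝ := max 1 x₀ + 1 with hcdef
  set v₁ : ℝ := (t₁ + u₀) / 2 with hv₁def
  set v₂ : ℝ := (u₀ + t₂) / 2 with hv₂def
  have ha0 : 0 < a := by positivity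
  have ha1 : a < 1 := by
    have := min_le_left 1 x₀; simp only [hadef]; linarith
  have hax : a < x₀ := by
    have := min_le_right 1 x₀; simp only [hadef]; linarith
  have hc1 : 1 < c := by
    have := le_max_left 1 x₀; simp only [hcdef]; linarith
  have hcx : x₀ < c := by
    have := le_max_right 1 x₀; simp only [hcdef]; linarith
  have hv₁ : t₁ < v₁ := by simp only [hv₁def]; linarith
  have hv₁u : v₁ < u₀ := by simp only [hv₁def]; linarith
  have hv₂u : u₀ < v₂ := by simp only [hv₂def]; linarith
  have hv₂ : v₂ < t₂ := by simp only [hv₂def]; linarith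
  set K : Set (ℝ × ℝ) := Set.Icc a c ×ˢ Set.Icc v₁ v₂ with hKdef
  have hKU : K ⊆ Set.Ioi (0:ℝ) ×ˢ Set.Ioo t₁ t₂ := by
    rintro ⟨y, w⟩ ⟨⟨hy1, hy2⟩, hw1, hw2⟩
    exact ⟨lt_of_lt_of_le ha0 hy1, lt_of_lt_of_le hv₁ hw1, lt_of_le_of_lt hw2 hv₂⟩
  have hK : IsCompact K := isCompact_Icc.prod isCompact_Icc
  have hhK : ContinuousOn h K := hh.mono hKU
  obtain ⟨M, hM⟩ := hK.exists_bound_of_continuousOn hhK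
  have hM0 : 0 ≤ M :=
    le_trans (norm_nonneg _) (hM (a, v₁) ⟨⟨le_refl a, by linarith⟩, le_refl v₁, by linarith⟩)
  have huc := hK.uniformContinuousOn_of_continuous hhK
  rw [Metric.uniformContinuousOn_iff] at huc
  -- continuity of slices
  have hslice : ∀ w ∈ Set.Icc v₁ v₂, ContinuousOn (fun s : ℝ => h (s, w)) (Set.Icc a c) := by
    intro w hw
    exact hhK.comp (Continuous.continuousOn (by fun_prop)) (fun s hs => ⟨hs, hw⟩)
  have hint : ∀ w ∈ Set.Icc v₁ v₂, ∀ y z : ℝ, y ∈ Set.Icc a c → z ∈ Set.Icc a c →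
      IntervalIntegrable (fun s : ℝ => h (s, w)) MeasureTheory.volume y z := by
    intro w hw y z hy hz
    exact ((hslice w hw).mono (Set.uIcc_subset_Icc hy hz)).intervalIntegrable
  rw [Metric.continuousAt_iff]
  intro ε hε
  have hca : (0:ℝ) < c - a + 1 := by linarith
  set ε₁ := ε / (2 * (c - a + 1)) with hε₁def
  have hε₁ : 0 < ε₁ := by positivity
  obtain ⟨δ₁, hδ₁0, hδ₁⟩ := huc ε₁ hε₁
  set δ₂ := ε / (2 * (M + 1)) with hδ₂def
  have hδ₂0 : 0 < δ₂ := by positivity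
  refine ⟨min (min δ₁ δ₂) (min (min (x₀ - a) (c - x₀)) (min (u₀ - v₁) (v₂ - u₀))),
    lt_min (lt_min hδ₁0 hδ₂0) (lt_min (lt_min (by linarith) (by linarith))
      (lt_min (by linarith) (by linarith))), ?_⟩
  intro q hdq
  rw [Prod.dist_eq, max_lt_iff, Real.dist_eq, Real.dist_eq] at hdq
  obtain ⟨hdx, hdu⟩ := hdq
  set x := q.1 with hxdef
  set u := q.2 with hudef
  have hdx1 : |x - x₀| < δ₁ := lt_of_lt_of_le hdx (le_trans (min_le_left _ _) (min_le_left _ _))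
  have hdx2 : |x - x₀| < δ₂ := lt_of_lt_of_le hdx (le_trans (min_le_left _ _) (min_le_right _ _))
  have hdu1 : |u - u₀| < δ₁ := lt_of_lt_of_le hdu (le_trans (min_le_left _ _) (min_le_left _ _))
  have hxa : a ≤ x := by
    have : |x - x₀| < x₀ - a := lt_of_lt_of_le hdx (le_trans (min_le_right _ _)
      (le_trans (min_le_left _ _) (min_le_left _ _)))
    rw [abs_lt] at this; linarith [this.1]
  have hxc : x ≤ c := by
    have : |x - x₀| < c - x₀ := lt_of_lt_of_le hdx (le_trans (min_le_right _ _)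
      (le_trans (min_le_left _ _) (min_le_right _ _)))
    rw [abs_lt] at this; linarith [this.2]
  have huv₁ : v₁ ≤ u := by
    have : |u - u₀| < u₀ - v₁ := lt_of_lt_of_le hdu (le_trans (min_le_right _ _)
      (le_trans (min_le_right _ _) (min_le_left _ _)))
    rw [abs_lt] at this; linarith [this.1]
  have huv₂ : u ≤ v₂ := by
    have : |u - u₀| < v₂ - u₀ := lt_of_lt_of_le hdu (le_trans (min_le_right _ _)
      (le_trans (min_le_right _ _) (min_le_right _ _)))
    rw [abs_lt] at this; linarith [this.2]
  have huIcc : u ∈ Set.Icc v₁ v₂ := ⟨huv₁, huv₂⟩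
  have hu₀Icc : u₀ ∈ Set.Icc v₁ v₂ := ⟨le_of_lt hv₁u, le_of_lt hv₂u⟩
  have h1Icc : (1:ℝ) ∈ Set.Icc a c := ⟨le_of_lt ha1, le_of_lt hc1⟩
  have hx₀Icc : x₀ ∈ Set.Icc a c := ⟨le_of_lt hax, le_of_lt hcx⟩
  have hxIcc : x ∈ Set.Icc a c := ⟨hxa, hxc⟩
  have split : (∫ s in (1:ℝ)..x, h (s, u)) =
      (∫ s in (1:ℝ)..x₀, h (s, u)) + ∫ s in x₀..x, h (s, u) :=
    (intervalIntegral.integral_add_adjacent_intervals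
      (hint u huIcc 1 x₀ h1Icc hx₀Icc) (hint u huIcc x₀ x hx₀Icc hxIcc)).symm
  have hdiffeq : (∫ s in (1:ℝ)..x, h (s, u)) - (∫ s in (1:ℝ)..x₀, h (s, u₀)) =
      (∫ s in (1:ℝ)..x₀, (h (s, u) - h (s, u₀))) + ∫ s in x₀..x, h (s, u) := by
    rw [split, intervalIntegral.integral_sub (hint u huIcc 1 x₀ h1Icc hx₀Icc)
      (hint u₀ hu₀Icc 1 x₀ h1Icc hx₀Icc)]
    ring
  have e1 : ‖∫ s in (1:ℝ)..x₀, (h (s, u) - h (s, u₀))‖ ≤ ε₁ * |x₀ - 1| := by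
    apply intervalIntegral.norm_integral_le_of_norm_le_const
    intro s hs
    have hsIcc : s ∈ Set.Icc a c := Set.uIcc_subset_Icc h1Icc hx₀Icc (Set.uIoc_subset_uIcc hs)
    have hdist : dist (s, u) (s, u₀) < δ₁ := by
      rw [Prod.dist_eq, Real.dist_eq, Real.dist_eq]
      simp only [sub_self, abs_zero]
      exact max_lt (by exact hδ₁0) hdu1
    have := hδ₁ (s, u) ⟨hsIcc, huIcc⟩ (s, u₀) ⟨hsIcc, hu₀Icc⟩ hdist
    rw [Real.dist_eq] at this
    exact le_of_lt this
  have e2 : ‖∫ s in x₀..x, h (s, u)‖ ≤ M * |x - x₀| := by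
    apply intervalIntegral.norm_integral_le_of_norm_le_const
    intro s hs
    have hsIcc : s ∈ Set.Icc a c := Set.uIcc_subset_Icc hx₀Icc hxIcc (Set.uIoc_subset_uIcc hs)
    exact hM (s, u) ⟨hsIcc, huIcc⟩
  rw [Real.dist_eq]
  have habs : |x₀ - 1| ≤ c - a := by
    rw [abs_sub_le_iff]; constructor <;> linarith [hx₀Icc.1, hx₀Icc.2, h1Icc.1, h1Icc.2]
  have key1 : ε₁ * (c - a + 1) = ε / 2 := by rw [hε₁def]; field_simp; try ring
  have hδeq : δ₂ * (M + 1) = ε / 2 := by rw [hδ₂def]; field_simp; try ring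
  clear_value x u x₀ u₀ a c v₁ v₂ K ε₁ δ₂
  have b1 : ε₁ * |x₀ - 1| ≤ ε₁ * (c - a) := mul_le_mul_of_nonneg_left habs (le_of_lt hε₁)
  have key1' : ε₁ * (c - a) < ε / 2 := by
    have h2 : ε₁ * (c - a) + ε₁ = ε / 2 := by rw [← key1]; ring
    linarith
  have b2 : M * |x - x₀| ≤ M * δ₂ := mul_le_mul_of_nonneg_left (le_of_lt hdx2) hM0
  have key2' : M * δ₂ < ε / 2 := by
    have h3 : M * δ₂ + δ₂ = ε / 2 := by rw [← hδeq]; ring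
    linarith
  rw [← hx₀def, ← hu₀def]
  calc |(∫ s in (1:ℝ)..x, h (s, u)) - ∫ s in (1:ℝ)..x₀, h (s, u₀)|
      ≤ ‖∫ s in (1:ℝ)..x₀, (h (s, u) - h (s, u₀))‖ + ‖∫ s in x₀..x, h (s, u)‖ := by
        rw [hdiffeq, ← Real.norm_eq_abs]; exact norm_add_le _ _
    _ ≤ ε₁ * (c - a) + M * δ₂ := add_le_add (e1.trans b1) (e2.trans b2)
    _ < ε := by linarith

set_option maxHeartbeats 1000000 in
lemma hasFDerivAt_parametric_primitive
    {f : ℝ × ℝ → ℝ} {t₁ t₂ : ℝ}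
    (hf : ContDiffOn ℝ 1 f (Set.Ioi (0:ℝ) ×ˢ Set.Ioo t₁ t₂))
    {q₀ : ℝ × ℝ} (hq : q₀ ∈ Set.Ioi (0:ℝ) ×ˢ Set.Ioo t₁ t₂) :
    HasFDerivAt (fun q : ℝ × ℝ => ∫ s in (1:ℝ)..q.1, f (s, q.2))
      (f q₀ • ContinuousLinearMap.fst ℝ ℝ ℝ +
        (∫ s in (1:ℝ)..q₀.1, (fderiv ℝ f (s, q₀.2)) (0, 1)) • ContinuousLinearMap.snd ℝ ℝ ℝ)
      q₀ := by
  have hUopen : IsOpen (Set.Ioi (0:ℝ) ×ˢ Set.Ioo t₁ t₂) := isOpen_Ioi.prod isOpen_Ioo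
  have hdiff : ∀ p ∈ Set.Ioi (0:ℝ) ×ˢ Set.Ioo t₁ t₂, HasFDerivAt f (fderiv ℝ f p) p := fun p hp =>
    (((hf.differentiableOn one_ne_zero) p hp).differentiableAt (hUopen.mem_nhds hp)).hasFDerivAt
  have hfc : ContinuousOn f (Set.Ioi (0:ℝ) ×ˢ Set.Ioo t₁ t₂) := hf.continuousOn
  set g : ℝ × ℝ → ℝ := fun p => (fderiv ℝ f p) (0, 1) with hgdef
  have hgc : ContinuousOn g (Set.Ioi (0:ℝ) ×ˢ Set.Ioo t₁ t₂) :=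
    (hf.continuousOn_fderiv_of_isOpen hUopen le_rfl).clm_apply continuousOn_const
  obtain ⟨hx0, hu1, hu2⟩ := hq
  simp only [Set.mem_Ioi] at hx0
  set x₀ := q₀.1 with hx₀def
  set u₀ := q₀.2 with hu₀def
  have hmin : 0 < min 1 x₀ := lt_min one_pos hx0
  set a : ℝ := min 1 x₀ / 2 with hadef
  set c : ℝ := max 1 x₀ + 1 with hcdef
  set v₁ : ℝ := (t₁ + u₀) / 2 with hv₁def
  set v₂ : ℝ := (u₀ + t₂) / 2 with hv₂def
  have ha0 : 0 < a := by positivity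
  have ha1 : a < 1 := by
    have := min_le_left 1 x₀; simp only [hadef]; linarith
  have hax : a < x₀ := by
    have := min_le_right 1 x₀; simp only [hadef]; linarith
  have hc1 : 1 < c := by
    have := le_max_left 1 x₀; simp only [hcdef]; linarith
  have hcx : x₀ < c := by
    have := le_max_right 1 x₀; simp only [hcdef]; linarith
  have hv₁ : t₁ < v₁ := by simp only [hv₁def]; linarith
  have hv₁u : v₁ < u₀ := by simp only [hv₁def]; linarith
  have hv₂u : u₀ < v₂ := by simp only [hv₂def]; linarith
  have hv₂ : v₂ < t₂ := by simp only [hv₂def]; linarith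
  have h1Icc : (1:ℝ) ∈ Set.Icc a c := ⟨le_of_lt ha1, le_of_lt hc1⟩
  have hx₀Icc : x₀ ∈ Set.Icc a c := ⟨le_of_lt hax, le_of_lt hcx⟩
  have hu₀Icc : u₀ ∈ Set.Icc v₁ v₂ := ⟨le_of_lt hv₁u, le_of_lt hv₂u⟩
  set K : Set (ℝ × ℝ) := Set.Icc a c ×ˢ Set.Icc v₁ v₂ with hKdef
  have hKU : K ⊆ Set.Ioi (0:ℝ) ×ˢ Set.Ioo t₁ t₂ := by
    rintro ⟨y, w⟩ ⟨⟨hy1, hy2⟩, hw1, hw2⟩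
    exact ⟨lt_of_lt_of_le ha0 hy1, lt_of_lt_of_le hv₁ hw1, lt_of_le_of_lt hw2 hv₂⟩
  have hK : IsCompact K := isCompact_Icc.prod isCompact_Icc
  obtain ⟨M, hM⟩ := hK.exists_bound_of_continuousOn (hgc.mono hKU)
  set ρ : ℝ := min (u₀ - v₁) (v₂ - u₀) with hρdef
  have hρ0 : 0 < ρ := lt_min (by linarith) (by linarith)
  have hball : Metric.ball u₀ ρ ⊆ Set.Icc v₁ v₂ := by
    intro u hu
    rw [Metric.mem_ball, Real.dist_eq, abs_lt] at hu
    constructor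
    · have := min_le_left (u₀ - v₁) (v₂ - u₀); linarith [hu.1]
    · have := min_le_right (u₀ - v₁) (v₂ - u₀); linarith [hu.2]
  -- continuity of slices
  have hslice : ∀ w ∈ Set.Icc v₁ v₂, ContinuousOn (fun s : ℝ => f (s, w)) (Set.Icc a c) :=
    fun w hw => (hfc.mono hKU).comp (Continuous.continuousOn (by fun_prop))
      (fun s hs => ⟨hs, hw⟩)
  have hgslice : ∀ w ∈ Set.Icc v₁ v₂, ContinuousOn (fun s : ℝ => g (s, w)) (Set.Icc a c) :=
    fun w hw => (hgc.mono hKU).comp (Continuous.continuousOn (by fun_prop))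
      (fun s hs => ⟨hs, hw⟩)
  have hint : ∀ w ∈ Set.Icc v₁ v₂, ∀ y z : ℝ, y ∈ Set.Icc a c → z ∈ Set.Icc a c →
      IntervalIntegrable (fun s : ℝ => f (s, w)) MeasureTheory.volume y z := by
    intro w hw y z hy hz
    exact ((hslice w hw).mono (Set.uIcc_subset_Icc hy hz)).intervalIntegrable
  -- Part A : derivative in the parameter
  have hA : HasDerivAt (fun u : ℝ => ∫ s in (1:ℝ)..x₀, f (s, u))
      (∫ s in (1:ℝ)..x₀, g (s, u₀)) u₀ := by
    refine (intervalIntegral.hasDerivAt_integral_of_dominated_loc_of_deriv_le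
      (F := fun u s => f (s, u)) (F' := fun u s => g (s, u)) (bound := fun _ => M)
      (Metric.ball_mem_nhds u₀ hρ0) ?_ ?_ ?_ ?_ ?_ ?_).2
    · refine Filter.eventually_of_mem (Metric.ball_mem_nhds u₀ hρ0) (fun u hu => ?_)
      exact ((hslice u (hball hu)).mono
        (Set.uIoc_subset_uIcc.trans (Set.uIcc_subset_Icc h1Icc hx₀Icc))).aestronglyMeasurable
          measurableSet_uIoc
    · exact hint u₀ hu₀Icc 1 x₀ h1Icc hx₀Icc
    · exact ((hgslice u₀ hu₀Icc).mono
        (Set.uIoc_subset_uIcc.trans (Set.uIcc_subset_Icc h1Icc hx₀Icc))).aestronglyMeasurable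
          measurableSet_uIoc
    · refine Filter.Eventually.of_forall (fun s hs u hu => ?_)
      exact hM (s, u) ⟨Set.uIcc_subset_Icc h1Icc hx₀Icc (Set.uIoc_subset_uIcc hs), hball hu⟩
    · exact intervalIntegrable_const
    · refine Filter.Eventually.of_forall (fun s hs u hu => ?_)
      have hsIcc : s ∈ Set.Icc a c := Set.uIcc_subset_Icc h1Icc hx₀Icc (Set.uIoc_subset_uIcc hs)
      have hmem : (s, u) ∈ Set.Ioi (0:ℝ) ×ˢ Set.Ioo t₁ t₂ := hKU ⟨hsIcc, hball hu⟩
      have h1 : HasDerivAt (fun u : ℝ => ((s : ℝ), u)) (((0 : ℝ), (1 : ℝ))) u :=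
        (hasDerivAt_const u s).prodMk (hasDerivAt_id u)
      exact (hdiff (s, u) hmem).comp_hasDerivAt_of_eq u h1 rfl
  have hAq : HasFDerivAt (fun q : ℝ × ℝ => ∫ s in (1:ℝ)..x₀, f (s, q.2))
      ((∫ s in (1:ℝ)..x₀, g (s, u₀)) • ContinuousLinearMap.snd ℝ ℝ ℝ) q₀ :=
    hA.comp_hasFDerivAt (f := Prod.snd) q₀ (hasFDerivAt_snd (p := q₀))
  -- Part B : derivative in the endpoint
  have hB : HasFDerivAt (fun q : ℝ × ℝ => ∫ s in x₀..q.1, f (s, q.2))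
      (f q₀ • ContinuousLinearMap.fst ℝ ℝ ℝ) q₀ := by
    obtain ⟨δ₄, hδ₄0, hδ₄⟩ := Metric.isOpen_iff.1 hUopen q₀ (hKU ⟨hx₀Icc, hu₀Icc⟩)
    refine HasFDerivAt.of_isLittleO ?_
    rw [Asymptotics.isLittleO_iff]
    intro C hC
    have hfc0 : ContinuousAt f q₀ := hfc.continuousAt (hUopen.mem_nhds (hKU ⟨hx₀Icc, hu₀Icc⟩))
    rw [Metric.continuousAt_iff] at hfc0
    obtain ⟨δ₀, hδ₀0, hδ₀⟩ := hfc0 C hC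
    filter_upwards [Metric.ball_mem_nhds q₀ (lt_min hδ₀0 hδ₄0)] with q hqball
    rw [Metric.mem_ball] at hqball
    have hkey : ∀ s ∈ Set.uIcc x₀ q.1, dist (s, q.2) q₀ ≤ dist q q₀ := by
      intro s hs
      rw [Prod.dist_eq, Real.dist_eq, Real.dist_eq]
      rw [Prod.dist_eq, Real.dist_eq, Real.dist_eq]
      exact max_le_max (abs_sub_le_of_mem_uIcc' hs) le_rfl
    have hmemU : ∀ s ∈ Set.uIcc x₀ q.1, (s, q.2) ∈ Set.Ioi (0:ℝ) ×ˢ Set.Ioo t₁ t₂ := by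
      intro s hs
      apply hδ₄
      rw [Metric.mem_ball]
      exact lt_of_le_of_lt (hkey s hs) (lt_of_lt_of_le hqball (min_le_right _ _))
    have hcont : ContinuousOn (fun s : ℝ => f (s, q.2)) (Set.uIcc x₀ q.1) :=
      hfc.comp (Continuous.continuousOn (by fun_prop)) (fun s hs => hmemU s hs)
    have heq : (fun q : ℝ × ℝ => ∫ s in x₀..q.1, f (s, q.2)) q -
        (fun q : ℝ × ℝ => ∫ s in x₀..q.1, f (s, q.2)) q₀ -
        ((f q₀ • ContinuousLinearMap.fst ℝ ℝ ℝ) (q - q₀)) =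
        ∫ s in x₀..q.1, (f (s, q.2) - f q₀) := by
      show (∫ s in x₀..q.1, f (s, q.2)) - (∫ s in x₀..q₀.1, f (s, q₀.2)) -
        ((f q₀ • ContinuousLinearMap.fst ℝ ℝ ℝ) (q - q₀)) =
        ∫ s in x₀..q.1, (f (s, q.2) - f q₀)
      rw [← hx₀def]
      rw [intervalIntegral.integral_same,
        intervalIntegral.integral_sub hcont.intervalIntegrable intervalIntegrable_const,
        intervalIntegral.integral_const]
      simp only [ContinuousLinearMap.smul_apply, ContinuousLinearMap.coe_fst', smul_eq_mul,
        Prod.fst_sub, sub_zero]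
      ring
    rw [heq]
    have hbd : ‖∫ s in x₀..q.1, (f (s, q.2) - f q₀)‖ ≤ C * |q.1 - x₀| := by
      apply intervalIntegral.norm_integral_le_of_norm_le_const
      intro s hs
      have h1 : dist (s, q.2) q₀ < δ₀ :=
        lt_of_le_of_lt (hkey s (Set.uIoc_subset_uIcc hs))
          (lt_of_lt_of_le hqball (min_le_left _ _))
      have := hδ₀ h1
      rw [Real.dist_eq] at this
      exact le_of_lt this
    refine hbd.trans (mul_le_mul_of_nonneg_left ?_ (le_of_lt hC))
    have := norm_fst_le (q - q₀)
    simpa [Prod.fst_sub, Real.norm_eq_abs] using this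
  -- combine
  have hsum := hB.add hAq
  refine hsum.congr_of_eventuallyEq ?_
  set δ₅ : ℝ := min ρ (min (x₀ - a) (c - x₀)) with hδ₅def
  have hδ₅0 : 0 < δ₅ := lt_min hρ0 (lt_min (by linarith) (by linarith))
  filter_upwards [Metric.ball_mem_nhds q₀ hδ₅0] with q hqball
  rw [Metric.mem_ball, Prod.dist_eq, max_lt_iff, Real.dist_eq, Real.dist_eq] at hqball
  obtain ⟨hd1, hd2⟩ := hqball
  have hq2 : q.2 ∈ Set.Icc v₁ v₂ := by
    apply hball
    rw [Metric.mem_ball, Real.dist_eq]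
    exact lt_of_lt_of_le hd2 (min_le_left _ _)
  have hq1 : q.1 ∈ Set.Icc a c := by
    have h1 : |q.1 - x₀| < x₀ - a :=
      lt_of_lt_of_le hd1 ((min_le_right _ _).trans (min_le_left _ _))
    have h2 : |q.1 - x₀| < c - x₀ :=
      lt_of_lt_of_le hd1 ((min_le_right _ _).trans (min_le_right _ _))
    rw [abs_lt] at h1 h2
    exact ⟨by linarith [h1.1], by linarith [h2.2]⟩
  have := intervalIntegral.integral_add_adjacent_intervals
    (hint q.2 hq2 1 x₀ h1Icc hx₀Icc) (hint q.2 hq2 x₀ q.1 hx₀Icc hq1)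
  show (∫ s in (1:ℝ)..q.1, f (s, q.2)) =
    (∫ s in x₀..q.1, f (s, q.2)) + ∫ s in (1:ℝ)..x₀, f (s, q.2)
  rw [← this]
  ring

set_option maxHeartbeats 1000000 in
lemma contDiffOn_parametric_primitive
    {f : ℝ × ℝ → ℝ} {t₁ t₂ : ℝ}
    (hf : ContDiffOn ℝ 1 f (Set.Ioi (0:ℝ) ×ˢ Set.Ioo t₁ t₂)) :
    ContDiffOn ℝ 1 (fun q : ℝ × ℝ => ∫ s in (1:ℝ)..q.1, f (s, q.2))
      (Set.Ioi (0:ℝ) ×ˢ Set.Ioo t₁ t₂) := by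
  have hUopen : IsOpen (Set.Ioi (0:ℝ) ×ˢ Set.Ioo t₁ t₂) := isOpen_Ioi.prod isOpen_Ioo
  rw [show (1 : WithTop ℕ∞) = 0 + 1 from rfl, contDiffOn_succ_iff_fderiv_of_isOpen hUopen]
  refine ⟨fun q hq =>
    ((hasFDerivAt_parametric_primitive hf hq).differentiableAt).differentiableWithinAt,
    by simp, ?_⟩
  rw [contDiffOn_zero]
  have hgc : ContinuousOn (fun p : ℝ × ℝ => (fderiv ℝ f p) (0, 1))
      (Set.Ioi (0:ℝ) ×ˢ Set.Ioo t₁ t₂) :=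
    (hf.continuousOn_fderiv_of_isOpen hUopen le_rfl).clm_apply continuousOn_const
  have hIc : ContinuousOn
      (fun q : ℝ × ℝ => ∫ s in (1:ℝ)..q.1, (fderiv ℝ f (s, q.2)) (0, 1))
      (Set.Ioi (0:ℝ) ×ˢ Set.Ioo t₁ t₂) :=
    fun q hq => (continuousAt_parametric_primitive hgc hq).continuousWithinAt
  refine ContinuousOn.congr ?_ (fun q hq => (hasFDerivAt_parametric_primitive hf hq).fderiv)
  exact (hf.continuousOn.smul continuousOn_const).add (hIc.smul continuousOn_const)

set_option maxHeartbeats 1000000 in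
/-- For `0 < b < b̄`, on the open cone
`O = {(R,Z) | R > 0, bR < Z < b̄R}`, if `P` is `C¹` on `O` and
`H(R,Z) = R ∫₁^R P(s, sZ/R)/s² ds`, then `H` is `C¹` on `O` and satisfies
the Euler identity `R ∂_R H + Z ∂_Z H − H = P` on `O`. -/
theorem stmt_0
    (b bbar : ℝ) (hb : 0 < b) (hbbar : b < bbar)
    (O : Set (ℝ × ℝ))
    (hO : O = {p : ℝ × ℝ | 0 < p.1 ∧ b * p.1 < p.2 ∧ p.2 < bbar * p.1})
    (P : ℝ × ℝ → ℝ) (hP : ContDiffOn ℝ 1 P O)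
    (H : ℝ × ℝ → ℝ)
    (hH : ∀ p : ℝ × ℝ, p ∈ O →
      H p = p.1 * ∫ s in (1:ℝ)..p.1, P (s, s * p.2 / p.1) / s ^ 2) :
    ContDiffOn ℝ 1 H O ∧
      ∀ p ∈ O,
        p.1 * fderiv ℝ H p (1, 0) + p.2 * fderiv ℝ H p (0, 1) - H p = P p := by
  subst hO
  have hOopen : IsOpen {p : ℝ × ℝ | 0 < p.1 ∧ b * p.1 < p.2 ∧ p.2 < bbar * p.1} := by
    have h1 : IsOpen {p : ℝ × ℝ | 0 < p.1} := isOpen_lt continuous_const continuous_fst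
    have h2 : IsOpen {p : ℝ × ℝ | b * p.1 < p.2} :=
      isOpen_lt (continuous_const.mul continuous_fst) continuous_snd
    have h3 : IsOpen {p : ℝ × ℝ | p.2 < bbar * p.1} :=
      isOpen_lt continuous_snd (continuous_const.mul continuous_fst)
    exact h1.inter (h2.inter h3)
  set f : ℝ × ℝ → ℝ := fun q => P (q.1, q.1 * q.2) / q.1 ^ 2 with hfdef
  have hψ : ContDiff ℝ 1 (fun q : ℝ × ℝ => (q.1, q.1 * q.2)) :=
    contDiff_fst.prodMk (contDiff_fst.mul contDiff_snd)
  have hmaps : Set.MapsTo (fun q : ℝ × ℝ => (q.1, q.1 * q.2))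
      (Set.Ioi (0:ℝ) ×ˢ Set.Ioo b bbar)
      {p : ℝ × ℝ | 0 < p.1 ∧ b * p.1 < p.2 ∧ p.2 < bbar * p.1} := by
    intro q hq
    simp only [Set.mem_prod, Set.mem_Ioi, Set.mem_Ioo] at hq
    obtain ⟨hs, hu1, hu2⟩ := hq
    refine ⟨hs, ?_, ?_⟩ <;> simp only [] <;> nlinarith
  have hfC : ContDiffOn ℝ 1 f (Set.Ioi (0:ℝ) ×ˢ Set.Ioo b bbar) := by
    apply ContDiffOn.div
    · exact hP.comp hψ.contDiffOn hmaps
    · exact (contDiff_fst.pow 2).contDiffOn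
    · intro q hq
      simp only [Set.mem_prod, Set.mem_Ioi] at hq
      exact pow_ne_zero 2 (ne_of_gt hq.1)
  set G : ℝ × ℝ → ℝ := fun q => ∫ s in (1:ℝ)..q.1, f (s, q.2) with hGdef
  have hGC : ContDiffOn ℝ 1 G (Set.Ioi (0:ℝ) ×ˢ Set.Ioo b bbar) :=
    contDiffOn_parametric_primitive hfC
  have hφC : ContDiffOn ℝ 1 (fun p : ℝ × ℝ => (p.1, p.2 / p.1))
      {p : ℝ × ℝ | 0 < p.1 ∧ b * p.1 < p.2 ∧ p.2 < bbar * p.1} := by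
    apply ContDiffOn.prodMk contDiff_fst.contDiffOn
    exact contDiff_snd.contDiffOn.div contDiff_fst.contDiffOn (fun p hp => ne_of_gt hp.1)
  have hφmaps : Set.MapsTo (fun p : ℝ × ℝ => (p.1, p.2 / p.1))
      {p : ℝ × ℝ | 0 < p.1 ∧ b * p.1 < p.2 ∧ p.2 < bbar * p.1}
      (Set.Ioi (0:ℝ) ×ˢ Set.Ioo b bbar) := by
    rintro p ⟨hR, h1, h2⟩
    simp only [Set.mem_prod, Set.mem_Ioi, Set.mem_Ioo]
    exact ⟨hR, (lt_div_iff₀ hR).2 (by linarith [h1]), (div_lt_iff₀ hR).2 (by linarith [h2])⟩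
  set Hform : ℝ × ℝ → ℝ := fun p => p.1 * G (p.1, p.2 / p.1) with hHfdef
  have hHformC : ContDiffOn ℝ 1 Hform
      {p : ℝ × ℝ | 0 < p.1 ∧ b * p.1 < p.2 ∧ p.2 < bbar * p.1} :=
    contDiff_fst.contDiffOn.mul (hGC.comp hφC hφmaps)
  have hHeq : ∀ p ∈ {p : ℝ × ℝ | 0 < p.1 ∧ b * p.1 < p.2 ∧ p.2 < bbar * p.1},
      H p = Hform p := by
    intro p hp
    rw [hH p hp]
    simp only [hHfdef, hGdef, hfdef]
    congr 1
    apply intervalIntegral.integral_congr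
    intro s _
    simp only [mul_div_assoc]
  constructor
  · exact hHformC.congr hHeq
  · intro p hp
    obtain ⟨hR, hZ1, hZ2⟩ := hp
    have hRne : p.1 ≠ 0 := ne_of_gt hR
    have hfe : fderiv ℝ H p = fderiv ℝ Hform p :=
      Filter.EventuallyEq.fderiv_eq
        (Filter.eventually_of_mem (hOopen.mem_nhds ⟨hR, hZ1, hZ2⟩) hHeq)
    have hφp : ((p.1, p.2 / p.1) : ℝ × ℝ) ∈ Set.Ioi (0:ℝ) ×ˢ Set.Ioo b bbar :=
      hφmaps ⟨hR, hZ1, hZ2⟩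
    have hGd := hasFDerivAt_parametric_primitive hfC hφp
    have hinv : HasFDerivAt (fun q : ℝ × ℝ => (q.1)⁻¹)
        ((-(p.1 ^ 2)⁻¹) • ContinuousLinearMap.fst ℝ ℝ ℝ) p :=
      (hasDerivAt_inv hRne).comp_hasFDerivAt p hasFDerivAt_fst
    have hratio0 : HasFDerivAt (fun q : ℝ × ℝ => q.2 * (q.1)⁻¹)
        (p.2 • ((-(p.1 ^ 2)⁻¹) • ContinuousLinearMap.fst ℝ ℝ ℝ) +
          (p.1)⁻¹ • ContinuousLinearMap.snd ℝ ℝ ℝ) p :=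
      hasFDerivAt_snd.mul hinv
    have hratio : HasFDerivAt (fun q : ℝ × ℝ => q.2 / q.1)
        (p.2 • ((-(p.1 ^ 2)⁻¹) • ContinuousLinearMap.fst ℝ ℝ ℝ) +
          (p.1)⁻¹ • ContinuousLinearMap.snd ℝ ℝ ℝ) p := by
      simpa only [div_eq_mul_inv] using hratio0
    have hφd : HasFDerivAt (fun q : ℝ × ℝ => ((q.1, q.2 / q.1) : ℝ × ℝ))
        ((ContinuousLinearMap.fst ℝ ℝ ℝ).prod
          (p.2 • ((-(p.1 ^ 2)⁻¹) • ContinuousLinearMap.fst ℝ ℝ ℝ) +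
            (p.1)⁻¹ • ContinuousLinearMap.snd ℝ ℝ ℝ)) p :=
      hasFDerivAt_fst.prodMk hratio
    have hcomp := hGd.comp p hφd
    have hHd : HasFDerivAt Hform
        (p.1 • ((f (p.1, p.2 / p.1) • ContinuousLinearMap.fst ℝ ℝ ℝ +
            (∫ s in (1:ℝ)..p.1, (fderiv ℝ f (s, p.2 / p.1)) (0, 1)) •
              ContinuousLinearMap.snd ℝ ℝ ℝ).comp
          ((ContinuousLinearMap.fst ℝ ℝ ℝ).prod
            (p.2 • ((-(p.1 ^ 2)⁻¹) • ContinuousLinearMap.fst ℝ ℝ ℝ) +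
              (p.1)⁻¹ • ContinuousLinearMap.snd ℝ ℝ ℝ))) +
          G (p.1, p.2 / p.1) • ContinuousLinearMap.fst ℝ ℝ ℝ) p :=
      hasFDerivAt_fst.mul hcomp
    have hHp : H p = p.1 * G (p.1, p.2 / p.1) := hHeq p ⟨hR, hZ1, hZ2⟩
    rw [hfe, hHd.fderiv, hHp]
    have hfval : f (p.1, p.2 / p.1) = P p / p.1 ^ 2 := by
      simp only [hfdef]
      have : p.1 * (p.2 / p.1) = p.2 := by field_simp
      rw [this]
    simp only [ContinuousLinearMap.add_apply, ContinuousLinearMap.smul_apply,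
      ContinuousLinearMap.coe_comp', Function.comp_apply, ContinuousLinearMap.prod_apply,
      ContinuousLinearMap.coe_fst', ContinuousLinearMap.coe_snd', smul_eq_mul, hfval]
    field_simp
    ring
end

section
/- Assume the pressure hypotheses. Then there exist a constant c > 0 and nonnegative real numbers 𝔞₁, 𝔞₂, 𝔞₃ such that 0 ≤ P(R,Z) ≤ c·H(R,Z) + 𝔞₁·R + 𝔞₂·Z + 𝔞₃ for every (R,Z) ∈ O̅. -/
open Set intervalIntegral Filter Topology MeasureTheory



/-- A convex function on a nonempty open convex subset of the plane admits an affine minorant. -/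
lemma aux_exists_affine_le (C : Set (ℝ × ℝ)) (hC : IsOpen C) (x₀ : ℝ × ℝ) (hx₀ : x₀ ∈ C)
    (f : ℝ × ℝ → ℝ) (hf : ConvexOn ℝ C f) :
    ∃ α β γ : ℝ, ∀ x ∈ C, α * x.1 + β * x.2 + γ ≤ f x := by
  have hfc : ContinuousOn f C := hf.continuousOn hC
  set S : Set ((ℝ × ℝ) × ℝ) := {q | q.1 ∈ C ∧ f q.1 < q.2} with hS
  have hSopen : IsOpen S := by
    have h1 : ContinuousOn (fun q : (ℝ × ℝ) × ℝ => q.2 - f q.1) (C ×ˢ (univ : Set ℝ)) := by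
      apply ContinuousOn.sub (continuous_snd.continuousOn)
      exact hfc.comp continuous_fst.continuousOn (fun q hq => hq.1)
    have := h1.isOpen_inter_preimage (hC.prod isOpen_univ) (isOpen_Ioi (a := (0:ℝ)))
    convert this using 1
    ext q
    simp only [hS, mem_setOf_eq, mem_inter_iff, mem_prod, mem_univ, and_true, mem_preimage,
      mem_Ioi, sub_pos]
  have hSconv : Convex ℝ S := by
    rintro ⟨x, s⟩ ⟨hx, hxs⟩ ⟨y, t⟩ ⟨hy, hyt⟩ a b ha hb hab
    refine ⟨hf.1 hx hy ha hb hab, ?_⟩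
    calc f (a • x + b • y) ≤ a * f x + b * f y := hf.2 hx hy ha hb hab
    _ < a * s + b * t := by
        rcases ha.lt_or_eq with ha' | ha'
        · rcases hb.lt_or_eq with hb' | hb'
          · exact add_lt_add (by nlinarith) (by nlinarith)
          · rw [← hb'] at hab ⊢; simp only [zero_mul, add_zero] at hab ⊢
            rw [hab]; simpa using hxs
        · rw [← ha'] at hab ⊢; simp only [zero_mul, zero_add] at hab ⊢
          rw [hab]; simpa using hyt
  have hz₀ : (x₀, f x₀) ∉ S := by simp [hS]
  obtain ⟨φ, hφ⟩ := geometric_hahn_banach_open_point hSconv hSopen hz₀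
  set c : ℝ := φ ((0, 0), 1) with hc
  have hsplit : ∀ (x : ℝ × ℝ) (t : ℝ), φ (x, t) = φ (x, 0) + t * c := by
    intro x t
    have : ((x, t) : (ℝ × ℝ) × ℝ) = (x, 0) + t • ((0, 0), 1) := by
      simp [Prod.ext_iff]
    rw [this, map_add, _root_.map_smul]
    simp [hc, smul_eq_mul]
  have hmem : ∀ x ∈ C, ∀ t, f x < t → ((x, t) : (ℝ × ℝ) × ℝ) ∈ S := fun x hx t ht => ⟨hx, ht⟩
  have hckey : ∀ x ∈ C, ∀ t, f x < t → φ (x, 0) + t * c < φ (x₀, 0) + f x₀ * c := by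
    intro x hx t ht
    have h0 := hφ _ (hmem x hx t ht)
    have e1 := hsplit x t
    have e2 := hsplit x₀ (f x₀)
    linarith
  have hcneg : c < 0 := by
    rcases lt_trichotomy c 0 with h | h | h
    · exact h
    · exfalso
      have := hckey x₀ hx₀ (f x₀ + 1) (by linarith)
      rw [h] at this; simp at this
    · exfalso
      have h1 := hckey x₀ hx₀ (max (f x₀ + 1) ((φ (x₀, 0) + f x₀ * c - φ (x₀, 0)) / c + 1))
        (lt_of_lt_of_le (by linarith) (le_max_left _ _))
      have h2 : (φ (x₀, 0) + f x₀ * c - φ (x₀, 0)) / c + 1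
          ≤ max (f x₀ + 1) ((φ (x₀, 0) + f x₀ * c - φ (x₀, 0)) / c + 1) := le_max_right _ _
      set T := max (f x₀ + 1) ((φ (x₀, 0) + f x₀ * c - φ (x₀, 0)) / c + 1)
      have : (φ (x₀, 0) + f x₀ * c - φ (x₀, 0)) / c < T := by linarith
      have := (div_lt_iff₀ h).mp this
      linarith
  have hkey : ∀ x ∈ C, φ (x, 0) + f x * c ≤ φ (x₀, 0) + f x₀ * c := by
    intro x hx
    by_contra hcon
    push_neg at hcon
    set gap := φ (x, 0) + f x * c - (φ (x₀, 0) + f x₀ * c) with hgap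
    have hgap0 : 0 < gap := by linarith
    have hε : 0 < gap / (2 * (-c)) := div_pos hgap0 (by linarith)
    have := hckey x hx (f x + gap / (2 * (-c))) (by linarith)
    have hcne : c ≠ 0 := hcneg.ne
    have : φ (x, 0) + (f x + gap / (2 * (-c))) * c
        = φ (x, 0) + f x * c - gap / 2 := by
      field_simp
      ring
    linarith [hckey x hx (f x + gap / (2 * (-c))) (by linarith), this.symm.trans_lt
      (hckey x hx (f x + gap / (2 * (-c))) (by linarith))]
  -- decompose the linear part
  set u : ℝ := φ ((1, 0), 0) with hu
  set v : ℝ := φ ((0, 1), 0) with hv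
  have hlin : ∀ x : ℝ × ℝ, φ (x, 0) = x.1 * u + x.2 * v := by
    intro x
    have : ((x, 0) : (ℝ × ℝ) × ℝ) = x.1 • (((1 : ℝ), (0 : ℝ)), (0 : ℝ))
        + x.2 • (((0 : ℝ), (1 : ℝ)), (0 : ℝ)) := by
      simp [Prod.ext_iff]
    rw [this, map_add, _root_.map_smul, _root_.map_smul]
    simp [hu, hv, smul_eq_mul]
  set D : ℝ := φ (x₀, 0) + f x₀ * c with hD
  refine ⟨-u / c, -v / c, D / c - (-u / c) * 0 - 0, ?_⟩
  intro x hx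
  have h1 := hkey x hx
  rw [hlin] at h1
  -- x.1 * u + x.2 * v + f x * c ≤ D, c < 0
  have : (D - (x.1 * u + x.2 * v)) / c ≤ f x := by
    rw [div_le_iff_of_neg hcneg]
    linarith
  calc -u / c * x.1 + -v / c * x.2 + (D / c - -u / c * 0 - 0)
      = (D - (x.1 * u + x.2 * v)) / c := by field_simp; ring
    _ ≤ f x := this


lemma aux_integral_inv_sq {a c : ℝ} (ha : 0 < a) (hc : 0 < c) :
    ∫ t in a..c, (t ^ 2)⁻¹ = a⁻¹ - c⁻¹ := by
  have h : ∀ t ∈ uIcc a c, HasDerivAt (fun t : ℝ => -t⁻¹) ((t ^ 2)⁻¹) t := by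
    intro t ht
    have ht0 : 0 < t := lt_of_lt_of_le (lt_min ha hc) ht.1
    have := (hasDerivAt_inv ht0.ne').neg
    have h' : HasDerivAt (-fun y : ℝ => y⁻¹) ((t ^ 2)⁻¹) t := by simpa using this
    exact h'
  have hint : IntervalIntegrable (fun t : ℝ => (t ^ 2)⁻¹) MeasureTheory.volume a c := by
    apply ContinuousOn.intervalIntegrable
    exact ((continuous_pow 2).continuousOn).inv₀
      (fun t ht => pow_ne_zero 2 (lt_of_lt_of_le (lt_min ha hc) ht.1).ne')
  have := intervalIntegral.integral_eq_sub_of_hasDerivAt h hint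
  rw [this]; ring

lemma aux_nonneg (b bbar : ℝ) (hb : 0 < b) (hbbar : b < bbar)
    (P H : ℝ × ℝ → ℝ)
    (hPcont : ContinuousOn P {p : ℝ × ℝ | 0 ≤ p.1 ∧ b * p.1 ≤ p.2 ∧ p.2 ≤ bbar * p.1})
    (hP0 : P (0, 0) = 0)
    (hHdef : ∀ p : ℝ × ℝ, 0 < p.1 →
      H p = p.1 * ∫ s in (1:ℝ)..p.1, P (s, s * p.2 / p.1) / s ^ 2)
    (hHconv : ConvexOn ℝ
      ({p : ℝ × ℝ | 0 ≤ p.1 ∧ b * p.1 ≤ p.2 ∧ p.2 ≤ bbar * p.1} \ {(0, 0)}) H)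
    (p : ℝ × ℝ) (hp : p ∈ {p : ℝ × ℝ | 0 ≤ p.1 ∧ b * p.1 ≤ p.2 ∧ p.2 ≤ bbar * p.1}) :
    0 ≤ P p := by
  obtain ⟨hp1, hp2, hp3⟩ := hp
  rcases hp1.eq_or_lt with hR0 | hR
  · -- p = (0,0)
    have h2 : p.2 = 0 := le_antisymm (by nlinarith) (by nlinarith)
    have : p = (0, 0) := Prod.ext (hR0.symm) h2
    rw [this, hP0]
  · set R := p.1 with hRdef
    set θ := p.2 / p.1 with hθdef
    have hθ1 : b ≤ θ := (le_div_iff₀ hR).mpr hp2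
    have hθ2 : θ ≤ bbar := (div_le_iff₀ hR).mpr (by linarith)
    have hray : ∀ s : ℝ, 0 ≤ s →
        (s, θ * s) ∈ {p : ℝ × ℝ | 0 ≤ p.1 ∧ b * p.1 ≤ p.2 ∧ p.2 ≤ bbar * p.1} :=
      fun s hs => ⟨hs, mul_le_mul_of_nonneg_right hθ1 hs, mul_le_mul_of_nonneg_right hθ2 hs⟩
    have hray' : ∀ s : ℝ, 0 < s →
        (s, θ * s) ∈ ({p : ℝ × ℝ | 0 ≤ p.1 ∧ b * p.1 ≤ p.2 ∧ p.2 ≤ bbar * p.1} \ {(0, 0)}) :=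
      fun s hs => ⟨hray s hs.le, by
        simp only [mem_singleton_iff, Prod.ext_iff]
        rintro ⟨h1, -⟩; exact hs.ne' h1⟩
    set f : ℝ → ℝ := fun s => P (s, θ * s) with hfdef
    set g : ℝ → ℝ := fun s => ∫ t in (1:ℝ)..s, f t / t ^ 2 with hgdef
    have hfc : ContinuousOn f (Ici 0) := by
      apply hPcont.comp ((continuous_id.prodMk (continuous_const.mul continuous_id)).continuousOn)
      exact fun s hs => hray s hs
    have hint : ∀ a c : ℝ, 0 < a → 0 < c →
        IntervalIntegrable (fun t => f t / t ^ 2) MeasureTheory.volume a c := by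
      intro a c ha hc
      apply ContinuousOn.intervalIntegrable
      have hsub : uIcc a c ⊆ Ioi 0 := fun t ht => lt_of_lt_of_le (lt_min ha hc) ht.1
      exact (hfc.mono (fun t ht => mem_Ici.mpr (le_of_lt (mem_Ioi.mp (hsub ht))))).div
        ((continuous_pow 2).continuousOn) (fun t ht => pow_ne_zero 2 (hsub ht).ne')
    have hhg : ∀ s : ℝ, 0 < s → H (s, θ * s) = s * g s := by
      intro s hs
      have heq := hHdef (s, θ * s) hs
      have harg : ∀ t : ℝ, t * (θ * s) / s = θ * t := by
        intro t; field_simp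
      simp only [harg] at heq
      exact heq
    -- limit of s * g s at 0⁺
    have hHlim : Tendsto (fun s => s * g s) (𝓝[>] (0:ℝ)) (𝓝 0) := by
      rw [Metric.tendsto_nhdsWithin_nhds]
      intro η hη
      have hf0 : f 0 = 0 := by
        have : ((0:ℝ), θ * 0) = ((0:ℝ), (0:ℝ)) := by norm_num
        simp only [hfdef, this, hP0]
      have hft : Tendsto f (𝓝[Ici 0] 0) (𝓝 0) := by
        have := hfc 0 self_mem_Ici
        rwa [ContinuousWithinAt, hf0] at this
      rw [Metric.tendsto_nhdsWithin_nhds] at hft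
      obtain ⟨δ0, hδ0, hδ0'⟩ := hft (η/4) (by positivity)
      set δ : ℝ := min (δ0/2) (1/2) with hδdef
      have hδpos : 0 < δ := lt_min (by linarith) (by norm_num)
      have hδlt1 : δ < 1 := lt_of_le_of_lt (min_le_right _ _) (by norm_num)
      have hδltδ0 : δ < δ0 := lt_of_le_of_lt (min_le_left _ _) (by linarith)
      set C : ℝ := |∫ t in δ..1, f t / t ^ 2| with hCdef
      refine ⟨min δ (η/4/(C+1)), lt_min hδpos (by positivity), ?_⟩
      intro ε hε hεd
      have hε0 : (0:ℝ) < ε := hε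
      have hdist : |ε| < min δ (η/4/(C+1)) := by
        simpa [Real.dist_eq] using hεd
      have hεδ : ε < δ := lt_of_lt_of_le (lt_of_abs_lt hdist) (min_le_left _ _)
      have hεC : ε < η/4/(C+1) := lt_of_lt_of_le (lt_of_abs_lt hdist) (min_le_right _ _)
      -- bound on the small piece
      have hintsq : IntervalIntegrable (fun t : ℝ => η/4 * (t ^ 2)⁻¹)
          MeasureTheory.volume ε δ := by
        apply ContinuousOn.intervalIntegrable
        exact continuousOn_const.mul (((continuous_pow 2).continuousOn).inv₀
          (fun t ht => pow_ne_zero 2 (lt_of_lt_of_le (lt_min hε0 hδpos) ht.1).ne'))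
      have h1 : |∫ t in ε..δ, f t / t ^ 2| ≤ η/4 * (ε⁻¹ - δ⁻¹) := by
        have hb1 : ∀ᵐ t ∂(MeasureTheory.volume.restrict (uIoc ε δ)),
            ‖f t / t ^ 2‖ ≤ η/4 * (t ^ 2)⁻¹ := by
          rw [uIoc_of_le hεδ.le]
          refine (MeasureTheory.ae_restrict_iff' measurableSet_Ioc).mpr
            (Filter.Eventually.of_forall ?_)
          intro t ht
          have ht0 : 0 < t := hε0.trans ht.1
          have hfb : |f t| < η/4 := by
            have := hδ0' (mem_Ici.mpr ht0.le)
              (by rw [Real.dist_eq, sub_zero, abs_of_pos ht0]; exact ht.2.trans_lt hδltδ0)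
            simpa [Real.dist_eq] using this
          rw [Real.norm_eq_abs, abs_div, abs_of_pos (by positivity : (0:ℝ) < t ^ 2),
            div_eq_mul_inv]
          exact mul_le_mul_of_nonneg_right hfb.le (by positivity)
        have := intervalIntegral.norm_integral_le_abs_of_norm_le hb1 hintsq
        rw [Real.norm_eq_abs] at this
        refine this.trans ?_
        rw [intervalIntegral.integral_const_mul, aux_integral_inv_sq hε0 hδpos]
        have hinv : δ⁻¹ ≤ ε⁻¹ := by
          rw [← one_div, ← one_div]
          exact one_div_le_one_div_of_le hε0 hεδ.le
        exact le_of_eq (abs_of_nonneg (mul_nonneg (by positivity) (by linarith)))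
      -- split g ε
      have hC0 : 0 ≤ C := abs_nonneg _
      have hsplit : g ε = -((∫ t in ε..δ, f t / t ^ 2) + ∫ t in δ..1, f t / t ^ 2) := by
        rw [intervalIntegral.integral_add_adjacent_intervals (hint ε δ hε0 hδpos)
          (hint δ 1 hδpos one_pos)]
        exact intervalIntegral.integral_symm ε 1
      have h2 : |g ε| ≤ η/4 * ε⁻¹ + C := by
        rw [hsplit, abs_neg]
        calc |(∫ t in ε..δ, f t / t ^ 2) + ∫ t in δ..1, f t / t ^ 2|
            ≤ |∫ t in ε..δ, f t / t ^ 2| + |∫ t in δ..1, f t / t ^ 2| := abs_add_le _ _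
          _ ≤ η/4 * (ε⁻¹ - δ⁻¹) + C := add_le_add h1 (le_of_eq rfl)
          _ ≤ η/4 * ε⁻¹ + C := by
              have : (0:ℝ) ≤ δ⁻¹ := by positivity
              nlinarith
      have h3 : |ε * g ε| ≤ η/4 + ε * C := by
        rw [abs_mul, abs_of_pos hε0]
        calc ε * |g ε| ≤ ε * (η/4 * ε⁻¹ + C) := mul_le_mul_of_nonneg_left h2 hε0.le
          _ = η/4 * (ε * ε⁻¹) + ε * C := by ring
          _ = η/4 + ε * C := by rw [mul_inv_cancel₀ hε0.ne']; ring
      have h4 : ε * C < η/4 := by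
        have h5 : ε * (C+1) < η/4/(C+1) * (C+1) :=
          mul_lt_mul_of_pos_right hεC (by positivity)
        rw [div_mul_cancel₀ _ (by positivity : (0:ℝ) < C + 1).ne'] at h5
        nlinarith
      rw [Real.dist_eq, sub_zero]
      calc |ε * g ε| ≤ η/4 + ε * C := h3
        _ < η/4 + η/4 := by linarith
        _ ≤ η := by linarith
    -- monotonicity of g
    have hgmono : ∀ s r : ℝ, 0 < s → s < r → g s ≤ g r := by
      intro s r hs hsr
      have hr : 0 < r := hs.trans hsr
      have key : ∀ ε ∈ Ioo (0:ℝ) s,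
          s * g s ≤ ((r-s)/(r-ε)) * (ε * g ε) + (1 - (r-s)/(r-ε)) * (r * g r) := by
        rintro ε ⟨hε0, hεs⟩
        have hrε : 0 < r - ε := by linarith
        set lam := (r-s)/(r-ε) with hlamdef
        have hlam0 : 0 ≤ lam := div_nonneg (by linarith) hrε.le
        have hlam1 : 0 ≤ 1 - lam := by
          have : lam ≤ 1 := (div_le_one hrε).mpr (by linarith)
          linarith
        have hcoord : lam * ε + (1-lam) * r = s := by
          have h : lam * (r - ε) = r - s := div_mul_cancel₀ _ hrε.ne'
          linear_combination -h
        have hcombo : lam • ((ε, θ*ε) : ℝ × ℝ) + (1-lam) • ((r, θ*r) : ℝ × ℝ) = (s, θ*s) := by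
          apply Prod.ext
          · simpa using hcoord
          · show lam * (θ*ε) + (1-lam) * (θ*r) = θ * s
            calc lam * (θ*ε) + (1-lam) * (θ*r) = θ * (lam * ε + (1-lam) * r) := by ring
              _ = θ * s := by rw [hcoord]
        have hcvx := hHconv.2 (hray' ε hε0) (hray' r hr) hlam0 hlam1 (by ring)
        rw [hcombo] at hcvx
        rw [hhg s hs, hhg ε hε0, hhg r hr] at hcvx
        exact hcvx
      have hF : Tendsto (fun ε => ((r-s)/(r-ε)) * (ε * g ε) + (1 - (r-s)/(r-ε)) * (r * g r))
          (𝓝[>] (0:ℝ)) (𝓝 ((r-s)/r * 0 + (1 - (r-s)/r) * (r * g r))) := by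
        have hlamT : Tendsto (fun ε : ℝ => (r-s)/(r-ε)) (𝓝[>] (0:ℝ)) (𝓝 ((r-s)/r)) := by
          have : Tendsto (fun ε : ℝ => (r-s)/(r-ε)) (𝓝 (0:ℝ)) (𝓝 ((r-s)/(r-0))) := by
            apply Tendsto.div tendsto_const_nhds (tendsto_const_nhds.sub tendsto_id)
            rw [sub_zero]; exact hr.ne'
          rw [sub_zero] at this
          exact this.mono_left nhdsWithin_le_nhds
        exact (hlamT.mul hHlim).add ((tendsto_const_nhds.sub hlamT).mul tendsto_const_nhds)
      have hle : s * g s ≤ (r-s)/r * 0 + (1 - (r-s)/r) * (r * g r) :=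
        ge_of_tendsto hF (Filter.eventually_of_mem (Ioo_mem_nhdsGT_of_mem ⟨le_rfl, hs⟩) key)
      have hsimp : (r-s)/r * 0 + (1 - (r-s)/r) * (r * g r) = s * g r := by
        field_simp
        ring
      rw [hsimp] at hle
      exact (mul_le_mul_iff_right₀ hs).mp hle
    -- conclusion
    have hsnd : θ * R = p.2 := by
      rw [hθdef, hRdef, div_mul_cancel₀ _ hR.ne']
    have hpid : ((R : ℝ), θ * R) = p := Prod.ext rfl hsnd
    by_contra hneg
    push_neg at hneg
    have hfR : f R < 0 := by
      show P (R, θ * R) < 0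
      rw [hpid]; exact hneg
    have hcw : Tendsto f (𝓝[Ici 0] R) (𝓝 (f R)) := hfc R hp1
    have hev : ∀ᶠ t in 𝓝[Ici 0] R, f t < f R / 2 :=
      hcw (Iio_mem_nhds (by linarith))
    obtain ⟨d, hd, hd'⟩ := Metric.mem_nhdsWithin_iff.mp hev
    set δ : ℝ := d/2 with hδdef
    have hδpos : 0 < δ := by positivity
    have hfneg : ∀ t ∈ Icc R (R+δ), f t < f R / 2 := by
      intro t ht
      apply hd'
      refine ⟨?_, le_trans hp1 ht.1⟩
      rw [Metric.mem_ball, Real.dist_eq, abs_of_nonneg (by linarith [ht.1])]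
      linarith [ht.2]
    have hpos : 0 < ∫ t in R..(R+δ), -(f t / t ^ 2) := by
      apply intervalIntegral_pos_of_pos_on ((hint R (R+δ) hR (by linarith)).neg)
      · intro t ht
        have ht0 : 0 < t := hR.trans ht.1
        have := hfneg t ⟨ht.1.le, ht.2.le⟩
        have : f t / t ^ 2 < 0 := div_neg_of_neg_of_pos (by linarith) (by positivity)
        show 0 < (-fun t => f t / t ^ 2) t
        simp only [Pi.neg_apply]
        linarith
      · linarith
    have hlt : ∫ t in R..(R+δ), f t / t ^ 2 < 0 := by
      rw [intervalIntegral.integral_neg] at hpos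
      linarith
    have hadj : g R + ∫ t in R..(R+δ), f t / t ^ 2 = g (R+δ) :=
      intervalIntegral.integral_add_adjacent_intervals (hint 1 R one_pos hR)
        (hint R (R+δ) hR (by linarith))
    have := hgmono R (R+δ) hR (by linarith)
    linarith





/-- Under the pressure hypotheses, there are `c > 0` and
nonnegative `𝔞₁, 𝔞₂, 𝔞₃` with `0 ≤ P(R,Z) ≤ c·H(R,Z) + 𝔞₁ R + 𝔞₂ Z + 𝔞₃`
for all `(R,Z) ∈ O̅`. -/
theorem stmt_5
    (b bbar : ℝ) (hb : 0 < b) (hbbar : b < bbar)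
    (O Obar : Set (ℝ × ℝ))
    (hO : O = {p : ℝ × ℝ | 0 < p.1 ∧ b * p.1 < p.2 ∧ p.2 < bbar * p.1})
    (hObar : Obar = {p : ℝ × ℝ | 0 ≤ p.1 ∧ b * p.1 ≤ p.2 ∧ p.2 ≤ bbar * p.1})
    (P H : ℝ × ℝ → ℝ)
    (hPcont : ContinuousOn P Obar) (hP0 : P (0, 0) = 0)
    (hPC1 : ContDiffOn ℝ 1 P (Obar \ {(0, 0)}))
    (hPC2 : ContDiffOn ℝ 2 P O)
    (hHdef : ∀ p : ℝ × ℝ, 0 < p.1 →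
      H p = p.1 * ∫ s in (1:ℝ)..p.1, P (s, s * p.2 / p.1) / s ^ 2)
    (hH0 : H (0, 0) = 0)
    (hHconv : StrictConvexOn ℝ (Obar \ {(0, 0)}) H)
    (aunder abar : ℝ) (haunder : 0 < aunder) (hab : aunder ≤ abar)
    (hconv1 : ConvexOn ℝ O (fun p => H p - aunder * P p))
    (hconv2 : ConvexOn ℝ O (fun p => abar * P p - H p)) :
    ∃ c a1 a2 a3 : ℝ, 0 < c ∧ 0 ≤ a1 ∧ 0 ≤ a2 ∧ 0 ≤ a3 ∧
      ∀ p ∈ Obar, 0 ≤ P p ∧ P p ≤ c * H p + a1 * p.1 + a2 * p.2 + a3 := by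
  
  subst hO hObar
  -- part 1: nonnegativity
  have hPnonneg : ∀ p ∈ {p : ℝ × ℝ | 0 ≤ p.1 ∧ b * p.1 ≤ p.2 ∧ p.2 ≤ bbar * p.1}, 0 ≤ P p :=
    aux_nonneg b bbar hb hbbar P H hPcont hP0 hHdef hHconv.convexOn
  -- basic geometry
  have hOsubObar : {p : ℝ × ℝ | 0 < p.1 ∧ b * p.1 < p.2 ∧ p.2 < bbar * p.1}
      ⊆ {p : ℝ × ℝ | 0 ≤ p.1 ∧ b * p.1 ≤ p.2 ∧ p.2 ≤ bbar * p.1} :=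
    fun q hq => ⟨hq.1.le, hq.2.1.le, hq.2.2.le⟩
  have hOopen : IsOpen {p : ℝ × ℝ | 0 < p.1 ∧ b * p.1 < p.2 ∧ p.2 < bbar * p.1} := by
    rw [show {p : ℝ × ℝ | 0 < p.1 ∧ b * p.1 < p.2 ∧ p.2 < bbar * p.1}
      = {p : ℝ × ℝ | 0 < p.1} ∩ ({p : ℝ × ℝ | b * p.1 < p.2} ∩ {p : ℝ × ℝ | p.2 < bbar * p.1})
      from by ext q; simp [mem_setOf_eq, and_assoc]]
    exact (isOpen_lt continuous_const continuous_fst).inter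
      ((isOpen_lt (continuous_const.mul continuous_fst) continuous_snd).inter
        (isOpen_lt continuous_snd (continuous_const.mul continuous_fst)))
  set p₀ : ℝ × ℝ := (1, (b + bbar) / 2) with hp₀def
  have hp₀ : p₀ ∈ {p : ℝ × ℝ | 0 < p.1 ∧ b * p.1 < p.2 ∧ p.2 < bbar * p.1} := by
    refine ⟨one_pos, ?_, ?_⟩ <;> (show _ < _) <;> · simp only [hp₀def]; nlinarith
  -- affine minorant of H - aunder * P on O
  obtain ⟨α, β, γ, hαβγ⟩ := aux_exists_affine_le _ hOopen p₀ hp₀ _ hconv1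
  refine ⟨1/aunder, |α|/aunder, |β|/aunder, |γ|/aunder,
    by positivity, by positivity, by positivity, by positivity, ?_⟩
  -- upper bound on O
  have hupperO : ∀ x ∈ {p : ℝ × ℝ | 0 < p.1 ∧ b * p.1 < p.2 ∧ p.2 < bbar * p.1},
      P x ≤ 1/aunder * H x + |α|/aunder * x.1 + |β|/aunder * x.2 + |γ|/aunder := by
    intro x hx
    have h1 := hαβγ x hx
    have hx1 : 0 ≤ x.1 := hx.1.le
    have hx2 : 0 ≤ x.2 := le_trans (by nlinarith) hx.2.1.le
    have hα' : -|α| * x.1 ≤ α * x.1 := mul_le_mul_of_nonneg_right (neg_abs_le α) hx1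
    have hβ' : -|β| * x.2 ≤ β * x.2 := mul_le_mul_of_nonneg_right (neg_abs_le β) hx2
    have hγ' : -|γ| ≤ γ := neg_abs_le γ
    have h2 : aunder * P x ≤ H x + |α| * x.1 + |β| * x.2 + |γ| := by linarith
    rw [show 1/aunder * H x + |α|/aunder * x.1 + |β|/aunder * x.2 + |γ|/aunder
      = (H x + |α| * x.1 + |β| * x.2 + |γ|) / aunder from by ring]
    rw [le_div_iff₀ haunder]
    linarith [h2]
  intro p hp
  refine ⟨hPnonneg p hp, ?_⟩
  by_cases hp0 : p = (0, 0)
  · rw [hp0]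
    simp only [hP0, hH0]
    have : (0:ℝ) ≤ |γ|/aunder := by positivity
    simpa using this
  · -- p ≠ 0; approximate from inside O
    have hp1 : 0 < p.1 := by
      rcases hp.1.eq_or_lt with h | h
      · exfalso
        apply hp0
        have h2 : p.2 = 0 := le_antisymm (by nlinarith [hp.2.2]) (by nlinarith [hp.2.1])
        exact Prod.ext h.symm h2
      · exact h
    set x : ℝ → ℝ × ℝ := fun t => ((1-t) * p.1 + t * 1, (1-t) * p.2 + t * ((b+bbar)/2))
      with hxdef
    have hxO : ∀ t ∈ Ioo (0:ℝ) 1,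
        x t ∈ {p : ℝ × ℝ | 0 < p.1 ∧ b * p.1 < p.2 ∧ p.2 < bbar * p.1} := by
      rintro t ⟨ht0, ht1⟩
      have h1t : 0 ≤ 1 - t := by linarith
      refine ⟨?_, ?_, ?_⟩
      · show (0:ℝ) < (1-t) * p.1 + t * 1
        nlinarith [hp.1]
      · show b * ((1-t) * p.1 + t * 1) < (1-t) * p.2 + t * ((b+bbar)/2)
        nlinarith [mul_le_mul_of_nonneg_left hp.2.1 h1t]
      · show (1-t) * p.2 + t * ((b+bbar)/2) < bbar * ((1-t) * p.1 + t * 1)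
        nlinarith [mul_le_mul_of_nonneg_left hp.2.2 h1t]
    have hpmem : p ∈ ({p : ℝ × ℝ | 0 ≤ p.1 ∧ b * p.1 ≤ p.2 ∧ p.2 ≤ bbar * p.1} \ {(0,0)}) :=
      ⟨hp, hp0⟩
    have hp₀mem : p₀ ∈ ({p : ℝ × ℝ | 0 ≤ p.1 ∧ b * p.1 ≤ p.2 ∧ p.2 ≤ bbar * p.1} \ {(0,0)}) :=
      ⟨hOsubObar hp₀, by simp [hp₀def, Prod.ext_iff]⟩
    have hHx : ∀ t ∈ Ioo (0:ℝ) 1, H (x t) ≤ (1-t) * H p + t * H p₀ := by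
      rintro t ⟨ht0, ht1⟩
      have hcombo : (1-t) • p + t • p₀ = x t := by
        apply Prod.ext <;> simp [hxdef, hp₀def, smul_eq_mul]
      have := hHconv.convexOn.2 hpmem hp₀mem (by linarith : (0:ℝ) ≤ 1 - t)
        ht0.le (by ring)
      rwa [hcombo] at this
    -- the inequality along the segment
    have hineq : ∀ t ∈ Ioo (0:ℝ) 1,
        P (x t) ≤ 1/aunder * ((1-t) * H p + t * H p₀)
          + |α|/aunder * (x t).1 + |β|/aunder * (x t).2 + |γ|/aunder := by
      intro t ht
      have h1 := hupperO (x t) (hxO t ht)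
      have h2 := hHx t ht
      have h3 : 1/aunder * H (x t) ≤ 1/aunder * ((1-t) * H p + t * H p₀) :=
        mul_le_mul_of_nonneg_left h2 (by positivity)
      linarith
    -- limits
    have hxcont : Continuous x := by
      apply Continuous.prodMk <;> fun_prop
    have hx0 : x 0 = p := by
      apply Prod.ext <;> simp [hxdef]
    have hxt : Tendsto x (𝓝[>] (0:ℝ))
        (𝓝[{p : ℝ × ℝ | 0 ≤ p.1 ∧ b * p.1 ≤ p.2 ∧ p.2 ≤ bbar * p.1}] p) := by
      rw [tendsto_nhdsWithin_iff]
      constructor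
      · have := (hxcont.tendsto 0).mono_left (nhdsWithin_le_nhds (s := Ioi (0:ℝ)))
        rwa [hx0] at this
      · filter_upwards [Ioo_mem_nhdsGT_of_mem (Set.mem_Ico.mpr ⟨le_rfl, one_pos⟩)] with t ht
        exact hOsubObar (hxO t ht)
    have hPlim : Tendsto (fun t => P (x t)) (𝓝[>] (0:ℝ)) (𝓝 (P p)) :=
      (hPcont p hp).tendsto.comp hxt
    have hGlim : Tendsto (fun t => 1/aunder * ((1-t) * H p + t * H p₀)
        + |α|/aunder * (x t).1 + |β|/aunder * (x t).2 + |γ|/aunder) (𝓝[>] (0:ℝ))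
        (𝓝 (1/aunder * H p + |α|/aunder * p.1 + |β|/aunder * p.2 + |γ|/aunder)) := by
      have hc : Continuous (fun t : ℝ => 1/aunder * ((1-t) * H p + t * H p₀)
          + |α|/aunder * (x t).1 + |β|/aunder * (x t).2 + |γ|/aunder) := by
        fun_prop
      have := (hc.tendsto 0).mono_left (nhdsWithin_le_nhds (s := Ioi (0:ℝ)))
      have h0 : 1/aunder * ((1-(0:ℝ)) * H p + 0 * H p₀)
          + |α|/aunder * (x 0).1 + |β|/aunder * (x 0).2 + |γ|/aunder
          = 1/aunder * H p + |α|/aunder * p.1 + |β|/aunder * p.2 + |γ|/aunder := by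
        rw [hx0]; ring
      rwa [h0] at this
    refine le_of_tendsto_of_tendsto hPlim hGlim ?_
    filter_upwards [Ioo_mem_nhdsGT_of_mem (Set.mem_Ico.mpr ⟨le_rfl, one_pos⟩)] with t ht
    exact hineq t ht
end

section
/- Let 0 < b < b̄, O = {(R,Z) ∈ ℝ² : R > 0, bR < Z < b̄R} and O̅ = {(R,Z) : R ≥ 0, bR ≤ Z ≤ b̄R}. Suppose P is continuous on O̅ with P(0,0) = 0 and continuously differentiable on O. Define H(R,Z) = R ∫₁^R P(s, sZ/R) s⁻² ds for R > 0 and H(0,0) = 0. Then H is continuous on O̅ (in particular H(R,Z) → 0 as (R,Z) → (0,0) within O̅) and continuously differentiable on O. -/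
open Set MeasureTheory intervalIntegral

private lemma clamp_mem {a₁ a₂ : ℝ} (h : a₁ ≤ a₂) (t : ℝ) :
    max a₁ (min t a₂) ∈ Set.Icc a₁ a₂ :=
  ⟨le_max_left _ _, max_le h (min_le_right _ _)⟩

private lemma clamp_eq {a₁ a₂ t : ℝ} (ht : t ∈ Set.Icc a₁ a₂) :
    max a₁ (min t a₂) = t := by
  rw [min_eq_left ht.2, max_eq_right ht.1]

private lemma primitive_continuousOn
    {g : ℝ × ℝ → ℝ} {a₁ a₂ c₁ c₂ : ℝ} (ha : a₁ ≤ a₂) (hc : c₁ ≤ c₂)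
    (hg : ContinuousOn g (Set.Icc a₁ a₂ ×ˢ Set.Icc c₁ c₂))
    (h1 : (1:ℝ) ∈ Set.Icc a₁ a₂) :
    ContinuousOn (fun p : ℝ × ℝ => ∫ t in (1:ℝ)..p.1, g (t, p.2))
      (Set.Icc a₁ a₂ ×ˢ Set.Icc c₁ c₂) := by
  have hcont : Continuous fun q : (ℝ × ℝ) × ℝ =>
      g (max a₁ (min q.2 a₂), max c₁ (min q.1.2 c₂)) := by
    apply hg.comp_continuous
    · exact ((continuous_const.max ((continuous_snd).min continuous_const)).prodMk
        (continuous_const.max (((continuous_snd.comp continuous_fst)).min continuous_const)))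
    · intro x
      exact ⟨clamp_mem ha _, clamp_mem hc _⟩
  have hΦ : Continuous fun p : ℝ × ℝ =>
      ∫ t in (1:ℝ)..p.1, g (max a₁ (min t a₂), max c₁ (min p.2 c₂)) := by
    apply intervalIntegral.continuous_parametric_intervalIntegral_of_continuous
      (μ := volume) (f := fun (p : ℝ × ℝ) (t : ℝ) => g (max a₁ (min t a₂), max c₁ (min p.2 c₂)))
      hcont continuous_fst
  apply hΦ.continuousOn.congr
  intro p hp
  simp only [mem_prod, mem_Icc] at hp
  apply intervalIntegral.integral_congr
  intro t ht
  have ht' : t ∈ Set.Icc a₁ a₂ := uIcc_subset_Icc h1 ⟨hp.1.1, hp.1.2⟩ ht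
  simp only [clamp_eq ht', clamp_eq ⟨hp.2.1, hp.2.2⟩]

private lemma primitive_hasFDerivAt
    {g : ℝ × ℝ → ℝ} {V : Set (ℝ × ℝ)} (hV : IsOpen V) (hg : ContDiffOn ℝ 1 g V)
    {a₁ a₂ c₁ c₂ : ℝ} (hQ : Set.Icc a₁ a₂ ×ˢ Set.Icc c₁ c₂ ⊆ V)
    (h1 : (1:ℝ) ∈ Set.Icc a₁ a₂)
    {x₀ k₀ : ℝ} (hx₀ : x₀ ∈ Set.Ioo a₁ a₂) (hk₀ : k₀ ∈ Set.Ioo c₁ c₂) :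
    HasFDerivAt (fun p : ℝ × ℝ => ∫ t in (1:ℝ)..p.1, g (t, p.2))
      (g (x₀, k₀) • ContinuousLinearMap.fst ℝ ℝ ℝ +
        (∫ t in (1:ℝ)..x₀, fderiv ℝ g (t, k₀) (0, 1)) • ContinuousLinearMap.snd ℝ ℝ ℝ)
      (x₀, k₀) := by
  have hmemQ : ∀ {t k : ℝ}, t ∈ Set.Icc a₁ a₂ → k ∈ Set.Icc c₁ c₂ → (t, k) ∈ V :=
    fun ht hk => hQ ⟨ht, hk⟩
  have hx₀' : x₀ ∈ Set.Icc a₁ a₂ := ⟨hx₀.1.le, hx₀.2.le⟩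
  have hk₀' : k₀ ∈ Set.Icc c₁ c₂ := ⟨hk₀.1.le, hk₀.2.le⟩
  have hgc : ContinuousOn g V := hg.continuousOn
  -- continuity of slices
  have hslice : ∀ {k : ℝ}, k ∈ Set.Icc c₁ c₂ →
      ContinuousOn (fun t => g (t, k)) (Set.Icc a₁ a₂) := by
    intro k hk
    exact hgc.comp ((continuous_id.prodMk continuous_const).continuousOn)
      (fun t ht => hmemQ ht hk)
  have hInt : ∀ {u v k : ℝ}, u ∈ Set.Icc a₁ a₂ → v ∈ Set.Icc a₁ a₂ → k ∈ Set.Icc c₁ c₂ →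
      IntervalIntegrable (fun t => g (t, k)) volume u v := by
    intro u v k hu hv hk
    exact ((hslice hk).mono (uIcc_subset_Icc hu hv)).intervalIntegrable
  set gk : ℝ × ℝ → ℝ := fun q => fderiv ℝ g q (0, 1) with hgk_def
  have hgkc : ContinuousOn gk V :=
    (hg.continuousOn_fderiv_of_isOpen hV le_rfl).clm_apply continuousOn_const
  obtain ⟨M, hM⟩ := (isCompact_Icc.prod isCompact_Icc).exists_bound_of_continuousOn
    (hgkc.mono hQ)
  have hder : ∀ {t k : ℝ}, t ∈ Set.Icc a₁ a₂ → k ∈ Set.Icc c₁ c₂ →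
      HasDerivAt (fun k => g (t, k)) (gk (t, k)) k := by
    intro t k ht hk
    have hd : DifferentiableAt ℝ g (t, k) :=
      (hg.differentiableOn one_ne_zero).differentiableAt (hV.mem_nhds (hmemQ ht hk))
    exact hd.hasFDerivAt.comp_hasDerivAt k ((hasDerivAt_const k t).prodMk (hasDerivAt_id k))
  have hIsub : Set.uIcc (1:ℝ) x₀ ⊆ Set.Icc a₁ a₂ := uIcc_subset_Icc h1 hx₀'
  set ε : ℝ := min (k₀ - c₁) (c₂ - k₀) with hε_def
  have hε : 0 < ε := lt_min (by linarith [hk₀.1]) (by linarith [hk₀.2])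
  have hball : Metric.ball k₀ ε ⊆ Set.Icc c₁ c₂ := by
    intro k hk
    rw [Metric.mem_ball, Real.dist_eq] at hk
    have := abs_lt.1 hk
    constructor
    · have h2 := min_le_left (k₀ - c₁) (c₂ - k₀); linarith
    · have h2 := min_le_right (k₀ - c₁) (c₂ - k₀); linarith
  -- derivative of the fixed-endpoint integral with respect to the parameter
  have hΨ : HasDerivAt (fun k => ∫ t in (1:ℝ)..x₀, g (t, k))
      (∫ t in (1:ℝ)..x₀, gk (t, k₀)) k₀ := by
    have key := intervalIntegral.hasDerivAt_integral_of_dominated_loc_of_deriv_le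
      (F := fun k t => g (t, k)) (F' := fun k t => gk (t, k)) (x₀ := k₀)
      (a := 1) (b := x₀) (bound := fun _ => M) (μ := volume) (Metric.ball_mem_nhds k₀ hε) ?_ ?_ ?_ ?_ ?_ ?_
    · exact key.2
    · filter_upwards [Metric.ball_mem_nhds k₀ hε] with k hk
      exact ((hslice (hball hk)).mono (Set.uIoc_subset_uIcc.trans hIsub)).aestronglyMeasurable
        measurableSet_uIoc
    · exact hInt h1 hx₀' hk₀'
    · have hco : ContinuousOn (fun t => gk (t, k₀)) (Set.Icc a₁ a₂) :=
        hgkc.comp ((continuous_id.prodMk continuous_const).continuousOn)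
          (fun t ht => hmemQ ht hk₀')
      exact (hco.mono (Set.uIoc_subset_uIcc.trans hIsub)).aestronglyMeasurable measurableSet_uIoc
    · refine Filter.Eventually.of_forall (fun t ht k hk => ?_)
      exact hM _ ⟨Set.uIoc_subset_uIcc.trans hIsub ht, hball hk⟩
    · exact intervalIntegrable_const
    · refine Filter.Eventually.of_forall (fun t ht k hk => ?_)
      exact hder (Set.uIoc_subset_uIcc.trans hIsub ht) (hball hk)
  have hB : HasFDerivAt (fun p : ℝ × ℝ => ∫ t in (1:ℝ)..x₀, g (t, p.2))
      ((∫ t in (1:ℝ)..x₀, gk (t, k₀)) • ContinuousLinearMap.snd ℝ ℝ ℝ) (x₀, k₀) :=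
    hΨ.comp_hasFDerivAt (f := fun p : ℝ × ℝ => p.2) (x₀, k₀) hasFDerivAt_snd
  have hA : HasFDerivAt (fun p : ℝ × ℝ => ∫ t in x₀..p.1, g (t, p.2))
      (g (x₀, k₀) • ContinuousLinearMap.fst ℝ ℝ ℝ) (x₀, k₀) := by
    rw [hasFDerivAt_iff_isLittleO_nhds_zero, Asymptotics.isLittleO_iff]
    intro c hc
    obtain ⟨δ, hδpos, hδ⟩ := Metric.continuousAt_iff.1
      (hgc.continuousAt (hV.mem_nhds (hmemQ hx₀' hk₀'))) c hc
    set δ' : ℝ := min δ (min (min (x₀ - a₁) (a₂ - x₀)) (min (k₀ - c₁) (c₂ - k₀))) with hδ'_def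
    have hle1 : δ' ≤ δ := min_le_left _ _
    have hle2 : δ' ≤ x₀ - a₁ := (min_le_right _ _).trans ((min_le_left _ _).trans (min_le_left _ _))
    have hle3 : δ' ≤ a₂ - x₀ := (min_le_right _ _).trans ((min_le_left _ _).trans (min_le_right _ _))
    have hle4 : δ' ≤ k₀ - c₁ := (min_le_right _ _).trans ((min_le_right _ _).trans (min_le_left _ _))
    have hle5 : δ' ≤ c₂ - k₀ := (min_le_right _ _).trans ((min_le_right _ _).trans (min_le_right _ _))
    have hδ'pos : 0 < δ' := by
      refine lt_min hδpos (lt_min (lt_min ?_ ?_) (lt_min ?_ ?_)) <;>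
        linarith [hx₀.1, hx₀.2, hk₀.1, hk₀.2]
    filter_upwards [Metric.ball_mem_nhds (0 : ℝ × ℝ) hδ'pos] with h hh
    rw [Metric.mem_ball, dist_zero_right] at hh
    have h1n : |h.1| ≤ ‖h‖ := by rw [← Real.norm_eq_abs]; exact norm_fst_le h
    have h2n : |h.2| ≤ ‖h‖ := by rw [← Real.norm_eq_abs]; exact norm_snd_le h
    have ha1 := abs_lt.1 (h1n.trans_lt hh)
    have ha2 := abs_lt.1 (h2n.trans_lt hh)
    have hxI : x₀ + h.1 ∈ Set.Icc a₁ a₂ := ⟨by linarith, by linarith⟩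
    have hkI : k₀ + h.2 ∈ Set.Icc c₁ c₂ := ⟨by linarith, by linarith⟩
    simp only [Prod.fst_add, Prod.snd_add, intervalIntegral.integral_same, sub_zero,
      ContinuousLinearMap.smul_apply, ContinuousLinearMap.coe_fst', smul_eq_mul]
    have hrw : (∫ t in x₀..(x₀ + h.1), g (t, k₀ + h.2)) - g (x₀, k₀) * h.1
        = ∫ t in x₀..(x₀ + h.1), (g (t, k₀ + h.2) - g (x₀, k₀)) := by
      rw [intervalIntegral.integral_sub (hInt hx₀' hxI hkI) intervalIntegrable_const,
        intervalIntegral.integral_const]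
      simp [smul_eq_mul, mul_comm]
    rw [hrw]
    refine (intervalIntegral.norm_integral_le_of_norm_le_const (C := c) ?_).trans ?_
    · intro t ht
      have htu : t ∈ Set.uIcc x₀ (x₀ + h.1) := Set.uIoc_subset_uIcc ht
      have htx : |t - x₀| ≤ |h.1| := by
        have := abs_sub_left_of_mem_uIcc htu
        simpa using this
      have hd : dist (t, k₀ + h.2) (x₀, k₀) < δ := by
        rw [Prod.dist_eq]
        have hd1 : dist t x₀ ≤ |h.1| := by rwa [Real.dist_eq]
        have hd2 : dist (k₀ + h.2) k₀ = |h.2| := by rw [Real.dist_eq]; ring_nf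
        refine lt_of_le_of_lt (max_le (hd1.trans h1n) (by rw [hd2]; exact h2n)) ?_
        exact hh.trans_le hle1
      have hgd := hδ hd
      rw [Real.dist_eq] at hgd
      rw [Real.norm_eq_abs]
      exact le_of_lt hgd
    · have : |x₀ + h.1 - x₀| = |h.1| := by ring_nf
      rw [this]
      exact mul_le_mul_of_nonneg_left h1n hc.le
  refine (hA.add hB).congr_of_eventuallyEq ?_
  have hu : Set.Ioo a₁ a₂ ×ˢ Set.Ioo c₁ c₂ ∈ nhds (x₀, k₀) :=
    (isOpen_Ioo.prod isOpen_Ioo).mem_nhds ⟨hx₀, hk₀⟩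
  filter_upwards [hu] with p hp
  have hpx : p.1 ∈ Set.Icc a₁ a₂ := ⟨hp.1.1.le, hp.1.2.le⟩
  have hpk : p.2 ∈ Set.Icc c₁ c₂ := ⟨hp.2.1.le, hp.2.2.le⟩
  have hadj := intervalIntegral.integral_add_adjacent_intervals
    (hInt h1 hx₀' hpk) (hInt hx₀' hpx hpk)
  show (∫ t in (1:ℝ)..p.1, g (t, p.2))
      = (∫ t in x₀..p.1, g (t, p.2)) + ∫ t in (1:ℝ)..x₀, g (t, p.2)
  linarith [hadj]


set_option maxHeartbeats 1000000 in
/-- For `0 < b < b̄`, with `O` the open cone and `O̅` its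
closure, if `P` is continuous on `O̅` with `P(0,0) = 0` and `C¹` on `O`, then
the pressure potential `H` (given by `H(R,Z) = R ∫₁^R P(s,sZ/R)/s² ds` for
`R > 0` and `H(0,0) = 0`) is continuous on `O̅` and `C¹` on `O`. -/
theorem stmt_6
    (b bbar : ℝ) (hb : 0 < b) (hbbar : b < bbar)
    (O Obar : Set (ℝ × ℝ))
    (hO : O = {p : ℝ × ℝ | 0 < p.1 ∧ b * p.1 < p.2 ∧ p.2 < bbar * p.1})
    (hObar : Obar = {p : ℝ × ℝ | 0 ≤ p.1 ∧ b * p.1 ≤ p.2 ∧ p.2 ≤ bbar * p.1})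
    (P : ℝ × ℝ → ℝ)
    (hPcont : ContinuousOn P Obar) (hP0 : P (0, 0) = 0)
    (hPC1 : ContDiffOn ℝ 1 P O)
    (H : ℝ × ℝ → ℝ)
    (hHdef : ∀ p : ℝ × ℝ, 0 < p.1 →
      H p = p.1 * ∫ s in (1:ℝ)..p.1, P (s, s * p.2 / p.1) / s ^ 2)
    (hH0 : H (0, 0) = 0) :
    ContinuousOn H Obar ∧ ContDiffOn ℝ 1 H O := by
  subst hO hObar
  set g : ℝ × ℝ → ℝ := fun q => P (q.1, q.1 * q.2) / q.1 ^ 2 with hg_def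
  set V : Set (ℝ × ℝ) := Set.Ioi (0:ℝ) ×ˢ Set.Ioo b bbar with hV_def
  have hVopen : IsOpen V := isOpen_Ioi.prod isOpen_Ioo
  -- `g` is C¹ on `V`
  have hgC1 : ContDiffOn ℝ 1 g V := by
    have hin : ContDiffOn ℝ 1 (fun q : ℝ × ℝ => P (q.1, q.1 * q.2)) V := by
      refine hPC1.comp ((contDiff_fst.prodMk (contDiff_fst.mul contDiff_snd)).contDiffOn) ?_
      rintro ⟨t, k⟩ ⟨ht, hk⟩
      refine ⟨ht, ?_, ?_⟩
      · calc b * t = t * b := mul_comm _ _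
          _ < t * k := by exact (mul_lt_mul_iff_right₀ ht).2 hk.1
      · calc t * k < t * bbar := (mul_lt_mul_iff_right₀ ht).2 hk.2
          _ = bbar * t := mul_comm _ _
    exact hin.div ((contDiff_fst.pow 2).contDiffOn)
      (fun q hq => pow_ne_zero 2 (ne_of_gt hq.1))
  -- `g` is continuous on the closed strip
  have hgcont : ContinuousOn g (Set.Ioi (0:ℝ) ×ˢ Set.Icc b bbar) := by
    have hin : ContinuousOn (fun q : ℝ × ℝ => P (q.1, q.1 * q.2))
        (Set.Ioi (0:ℝ) ×ˢ Set.Icc b bbar) := by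
      refine hPcont.comp ((continuous_fst.prodMk (continuous_fst.mul continuous_snd)).continuousOn) ?_
      rintro ⟨t, k⟩ ⟨ht, hk⟩
      refine ⟨le_of_lt ht, ?_, ?_⟩
      · calc b * t = t * b := mul_comm _ _
          _ ≤ t * k := mul_le_mul_of_nonneg_left hk.1 (le_of_lt ht)
      · calc t * k ≤ t * bbar := mul_le_mul_of_nonneg_left hk.2 (le_of_lt ht)
          _ = bbar * t := mul_comm _ _
    exact hin.div ((continuous_fst.pow 2).continuousOn)
      (fun q hq => pow_ne_zero 2 (ne_of_gt hq.1))
  set F : ℝ × ℝ → ℝ := fun w => ∫ t in (1:ℝ)..w.1, g (t, w.2) with hF_def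
  -- the integrand of `H` matches `g`
  have hHeq : ∀ p : ℝ × ℝ, 0 < p.1 → H p = p.1 * F (p.1, p.2 / p.1) := by
    intro p hp
    rw [hHdef p hp]
    congr 1
    apply intervalIntegral.integral_congr
    intro t _
    simp only [hg_def, mul_div_assoc]
  constructor
  · -- Continuity on the closed cone
    intro p₀ hp₀
    simp only [Set.mem_setOf_eq] at hp₀
    rcases eq_or_lt_of_le hp₀.1 with h0 | hpos
    · -- vertex case
      have hp₀eq : p₀ = ((0:ℝ), (0:ℝ)) := by
        have h1 : p₀.1 = 0 := h0.symm
        have h2 : p₀.2 = 0 := le_antisymm (by simpa [h1] using hp₀.2.2)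
          (by simpa [h1] using hp₀.2.1)
        exact Prod.ext h1 h2
      rw [hp₀eq]
      rw [Metric.continuousWithinAt_iff]
      intro ε hε
      have h00 : ((0:ℝ), (0:ℝ)) ∈ {p : ℝ × ℝ | 0 ≤ p.1 ∧ b * p.1 ≤ p.2 ∧ p.2 ≤ bbar * p.1} := by
        simp
      obtain ⟨δ₁, hδ₁pos, hδ₁⟩ := Metric.continuousWithinAt_iff.1 (hPcont _ h00) (ε/2)
        (by linarith)
      set C₀ : ℝ := 1 + |b| + |bbar| with hC₀_def
      have hC₀ : 0 < C₀ := by positivity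
      have hC₀1 : 1 ≤ C₀ := by nlinarith [abs_nonneg b, abs_nonneg bbar]
      set d : ℝ := min (δ₁ / (2 * C₀)) 1 with hd_def
      have hdpos : 0 < d := lt_min (by positivity) one_pos
      have hd1 : d ≤ 1 := min_le_right _ _
      have hgsmall : ∀ t k : ℝ, 0 < t → t ≤ d → k ∈ Set.Icc b bbar →
          |g (t, k)| ≤ (ε/2) / t^2 := by
        intro t k ht htd hk
        have habsk : |k| ≤ |b| + |bbar| := by
          rw [abs_le]
          constructor <;>
            [linarith [neg_abs_le b, abs_nonneg bbar, hk.1];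
             linarith [le_abs_self bbar, abs_nonneg b, hk.2]]
        have hmem : (t, t * k) ∈ {p : ℝ × ℝ | 0 ≤ p.1 ∧ b * p.1 ≤ p.2 ∧ p.2 ≤ bbar * p.1} := by
          refine ⟨ht.le, ?_, ?_⟩
          · calc b * t = t * b := mul_comm _ _
              _ ≤ t * k := mul_le_mul_of_nonneg_left hk.1 ht.le
          · calc t * k ≤ t * bbar := mul_le_mul_of_nonneg_left hk.2 ht.le
              _ = bbar * t := mul_comm _ _
        have hdistq : dist ((t, t*k) : ℝ × ℝ) ((0:ℝ), (0:ℝ)) < δ₁ := by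
          rw [Prod.dist_eq]
          have h1 : dist t 0 = t := by rw [Real.dist_eq, sub_zero, abs_of_pos ht]
          have h2 : dist (t*k) 0 = t * |k| := by
            rw [Real.dist_eq, sub_zero, abs_mul, abs_of_pos ht]
          have hmax : max (dist t 0) (dist (t*k) 0) ≤ t * C₀ := by
            rw [h1, h2]
            refine max_le ?_ ?_
            · nlinarith
            · nlinarith
          refine lt_of_le_of_lt hmax ?_
          have hd2 : d ≤ δ₁ / (2*C₀) := min_le_left _ _
          calc t * C₀ ≤ d * C₀ := mul_le_mul_of_nonneg_right htd hC₀.le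
            _ ≤ (δ₁/(2*C₀)) * C₀ := mul_le_mul_of_nonneg_right hd2 hC₀.le
            _ = δ₁/2 := by field_simp
            _ < δ₁ := by linarith
        have hPsmall := hδ₁ hmem hdistq
        rw [hP0, dist_eq_norm, sub_zero, Real.norm_eq_abs] at hPsmall
        have hgq : g (t, k) = P (t, t*k) / t^2 := rfl
        rw [hgq, abs_div, abs_of_nonneg (by positivity : (0:ℝ) ≤ t^2)]
        rw [div_le_div_iff₀ (by positivity) (by positivity)]
        nlinarith [abs_nonneg (P (t, t*k)), sq_nonneg t]
      obtain ⟨M, hM⟩ := (isCompact_Icc.prod isCompact_Icc).exists_bound_of_continuousOn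
        (hgcont.mono (Set.prod_mono (fun t ht => lt_of_lt_of_le hdpos ht.1) subset_rfl))
      have hM0 : 0 ≤ M := le_trans (norm_nonneg _)
        (hM (d, b) ⟨⟨le_refl d, hd1⟩, le_refl b, hbbar.le⟩)
      clear_value d C₀
      refine ⟨min d (ε / (2 * (M + 1))), lt_min hdpos (by positivity), ?_⟩
      intro p hp hdistp
      simp only [Set.mem_setOf_eq] at hp
      rcases eq_or_lt_of_le hp.1 with hz | hr
      · have hpz : p = ((0:ℝ), (0:ℝ)) := Prod.ext hz.symm
          (le_antisymm (by simpa [← hz] using hp.2.2) (by simpa [← hz] using hp.2.1))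
        rw [hpz]
        simpa using hε
      · set r := p.1 with hr_def
        set k := p.2 / p.1 with hk_def
        have hkmem : k ∈ Set.Icc b bbar :=
          ⟨(le_div_iff₀ hr).2 (by linarith [mul_comm b p.1, hp.2.1]),
           (div_le_iff₀ hr).2 (by linarith [mul_comm bbar p.1, hp.2.2])⟩
        have hrdist : r < min d (ε / (2 * (M + 1))) := by
          refine lt_of_le_of_lt ?_ hdistp
          rw [Prod.dist_eq]
          have : dist p.1 0 = r := by rw [Real.dist_eq, sub_zero, abs_of_pos hr]
          rw [← this]
          exact le_max_left _ _
        have hrd1 : r < d := lt_of_lt_of_le hrdist (min_le_left _ _)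
        have hrd2 : r < ε / (2 * (M + 1)) := lt_of_lt_of_le hrdist (min_le_right _ _)
        have hslice : ContinuousOn (fun t => g (t, k)) (Set.Ioi (0:ℝ)) :=
          hgcont.comp ((continuous_id.prodMk continuous_const).continuousOn)
            (fun t ht => ⟨ht, hkmem⟩)
        have hsub1 : Set.uIcc r d ⊆ Set.Ioi (0:ℝ) := fun t ht =>
          lt_of_lt_of_le (lt_min hr hdpos) ht.1
        have hsub2 : Set.uIcc d 1 ⊆ Set.Ioi (0:ℝ) := fun t ht =>
          lt_of_lt_of_le (lt_min hdpos one_pos) ht.1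
        have hint1 : IntervalIntegrable (fun t => g (t, k)) volume r d :=
          (hslice.mono hsub1).intervalIntegrable
        have hint2 : IntervalIntegrable (fun t => g (t, k)) volume d 1 :=
          (hslice.mono hsub2).intervalIntegrable
        have hHp : H p = r * ∫ t in (1:ℝ)..r, g (t, k) := hHeq p hr
        have hsplit : (∫ t in (1:ℝ)..r, g (t, k))
            = -((∫ t in r..d, g (t, k)) + ∫ t in d..1, g (t, k)) := by
          rw [intervalIntegral.integral_add_adjacent_intervals hint1 hint2,
            ← intervalIntegral.integral_symm]
        have hb1 : |∫ t in r..d, g (t, k)| ≤ (ε/2) * r⁻¹ := by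
          have hbint : IntervalIntegrable (fun t => (ε/2)/t^2) volume r d := by
            apply ContinuousOn.intervalIntegrable
            exact continuousOn_const.div ((continuous_pow 2).continuousOn)
              (fun t ht => pow_ne_zero 2 (ne_of_gt (hsub1 ht)))
          have hnorm := intervalIntegral.norm_integral_le_abs_of_norm_le
            (f := fun t => g (t, k)) (g := fun t => (ε/2)/t^2) (μ := volume) (a := r) (b := d)
            ?_ hbint
          · rw [Real.norm_eq_abs] at hnorm
            refine le_trans hnorm ?_
            have hftc : ∀ t ∈ Set.uIcc r d, HasDerivAt (fun y : ℝ => -y⁻¹) (1/t^2) t := by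
              intro t ht
              have ht0 : t ≠ 0 := ne_of_gt (hsub1 ht)
              have hder := (hasDerivAt_inv ht0).fun_neg
              simpa [one_div, inv_pow] using hder
            have hint3 : IntervalIntegrable (fun t : ℝ => 1/t^2) volume r d := by
              apply ContinuousOn.intervalIntegrable
              exact continuousOn_const.div ((continuous_pow 2).continuousOn)
                (fun t ht => pow_ne_zero 2 (ne_of_gt (hsub1 ht)))
            have hcompute := intervalIntegral.integral_eq_sub_of_hasDerivAt hftc hint3
            have hval : (∫ t in r..d, (ε/2)/t^2) = (ε/2) * (r⁻¹ - d⁻¹) := by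
              have hfun : (fun t : ℝ => (ε/2)/t^2) = fun t : ℝ => (ε/2) * (1/t^2) := by
                funext t; ring
              rw [hfun, intervalIntegral.integral_const_mul, hcompute]
              ring
            rw [hval]
            have hinv : d⁻¹ ≤ r⁻¹ := by
              apply inv_anti₀ hr hrd1.le
            have hinv0 : 0 ≤ d⁻¹ := inv_nonneg.2 hdpos.le
            have habs0 : 0 ≤ (ε/2) * (r⁻¹ - d⁻¹) :=
              mul_nonneg (by linarith) (by linarith)
            rw [abs_of_nonneg habs0]
            exact mul_le_mul_of_nonneg_left (sub_le_self _ hinv0) (by linarith)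
          · rw [ae_restrict_iff' measurableSet_uIoc]
            refine Filter.Eventually.of_forall (fun t ht => ?_)
            rw [Set.uIoc_of_le hrd1.le] at ht
            rw [Real.norm_eq_abs]
            exact hgsmall t k (lt_trans hr ht.1) ht.2 hkmem
        have hb2 : |∫ t in d..1, g (t, k)| ≤ M := by
          have hnorm := intervalIntegral.norm_integral_le_of_norm_le_const (C := M)
            (f := fun t => g (t, k)) (a := d) (b := 1) ?_
          · rw [Real.norm_eq_abs] at hnorm
            refine le_trans hnorm ?_
            rw [abs_of_nonneg (by linarith : (0:ℝ) ≤ 1 - d)]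
            nlinarith [hM0, hdpos.le, hd1]
          · intro t ht
            rw [Set.uIoc_of_le hd1] at ht
            exact hM (t, k) ⟨⟨ht.1.le, ht.2⟩, hkmem⟩
        clear_value r k
        have hkey : |∫ t in (1:ℝ)..r, g (t, k)| ≤ (ε/2) * r⁻¹ + M := by
          rw [hsplit, abs_neg]
          exact le_trans (abs_add_le _ _) (add_le_add hb1 hb2)
        have hfinal : dist (H p) (H ((0:ℝ), (0:ℝ))) = |H p| := by
          rw [hH0, dist_eq_norm, sub_zero, Real.norm_eq_abs]
        rw [hfinal, hHp, abs_mul, abs_of_pos hr]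
        have hrinv : r * ((ε/2) * r⁻¹) = ε/2 := by field_simp
        calc r * |∫ t in (1:ℝ)..r, g (t, k)| ≤ r * ((ε/2) * r⁻¹ + M) := by
              exact mul_le_mul_of_nonneg_left hkey hr.le
          _ = ε/2 + r * M := by rw [mul_add, hrinv]
          _ < ε := by
              have hmul := (lt_div_iff₀ (by positivity : (0:ℝ) < 2*(M+1))).1 hrd2
              nlinarith [hM0, hr.le]
    · -- interior case : p₀.1 > 0
      set a₁ : ℝ := min 1 (p₀.1 / 2) with ha₁_def
      set a₂ : ℝ := max 1 p₀.1 + 1 with ha₂_def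
      have ha₁pos : 0 < a₁ := lt_min one_pos (by linarith)
      have h1mem : (1:ℝ) ∈ Set.Icc a₁ a₂ :=
        ⟨min_le_left _ _, by linarith [le_max_left (1:ℝ) p₀.1]⟩
      have hrect : Set.Icc a₁ a₂ ×ˢ Set.Icc b bbar ⊆ Set.Ioi (0:ℝ) ×ˢ Set.Icc b bbar :=
        Set.prod_mono (fun t ht => lt_of_lt_of_le ha₁pos ht.1) subset_rfl
      have hFc : ContinuousOn F (Set.Icc a₁ a₂ ×ˢ Set.Icc b bbar) :=
        primitive_continuousOn (le_trans h1mem.1 h1mem.2) hbbar.le (hgcont.mono hrect) h1mem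
      set S : Set (ℝ × ℝ) := {p : ℝ × ℝ | 0 ≤ p.1 ∧ b * p.1 ≤ p.2 ∧ p.2 ≤ bbar * p.1} ∩
        {p : ℝ × ℝ | a₁ < p.1 ∧ p.1 < a₂} with hS_def
      have hφc : ContinuousOn (fun p : ℝ × ℝ => (p.1, p.2 / p.1)) S :=
        continuousOn_fst.prodMk (continuousOn_snd.div continuousOn_fst
          (fun p hp => ne_of_gt (lt_trans ha₁pos hp.2.1)))
      have hmapsS : ∀ p ∈ S, (p.1, p.2 / p.1) ∈ Set.Icc a₁ a₂ ×ˢ Set.Icc b bbar := by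
        rintro ⟨R, Z⟩ ⟨⟨hR0, hbz, hzb⟩, hR1, hR2⟩
        have hRpos : (0:ℝ) < R := lt_trans ha₁pos hR1
        exact ⟨⟨hR1.le, hR2.le⟩, (le_div_iff₀ hRpos).2 (by linarith [mul_comm b R]),
          (div_le_iff₀ hRpos).2 (by linarith [mul_comm bbar R])⟩
      have hHS : ContinuousOn H S := by
        refine (ContinuousOn.mul continuousOn_fst (hFc.comp hφc hmapsS)).congr ?_
        intro p hp
        exact hHeq p (lt_trans ha₁pos hp.2.1)
      have hp₀S : p₀ ∈ S := by
        refine ⟨hp₀, ?_, ?_⟩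
        · have : min 1 (p₀.1/2) ≤ p₀.1/2 := min_le_right _ _
          simp only [ha₁_def] at *
          show min 1 (p₀.1/2) < p₀.1
          linarith
        · show p₀.1 < max 1 p₀.1 + 1
          linarith [le_max_right (1:ℝ) p₀.1]
      refine (hHS p₀ hp₀S).mono_of_mem_nhdsWithin ?_
      refine mem_nhdsWithin.2 ⟨{p : ℝ × ℝ | a₁ < p.1 ∧ p.1 < a₂}, ?_, ⟨hp₀S.2.1, hp₀S.2.2⟩, ?_⟩
      · exact (isOpen_lt continuous_const continuous_fst).inter
          (isOpen_lt continuous_fst continuous_const)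
      · rintro p ⟨hpu, hpo⟩
        exact ⟨hpo, hpu⟩
  · -- C¹ part
    have hFC1 : ∀ w ∈ V, ContDiffAt ℝ 1 F w := by
      rintro ⟨x₀, k₀⟩ ⟨hx₀, hk₀⟩
      simp only [Set.mem_Ioi, Set.mem_Ioo] at hx₀ hk₀
      set a₁ : ℝ := min 1 x₀ / 2 with ha₁_def
      set a₂ : ℝ := max 1 x₀ + 1 with ha₂_def
      set c₁ : ℝ := (b + k₀) / 2 with hc₁_def
      set c₂ : ℝ := (k₀ + bbar) / 2 with hc₂_def
      have ha₁pos : 0 < a₁ := by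
        have := lt_min one_pos hx₀
        simp only [ha₁_def]; linarith
      have h1mem : (1:ℝ) ∈ Set.Icc a₁ a₂ := by
        constructor
        · have : min 1 x₀ ≤ 1 := min_le_left _ _
          simp only [ha₁_def]; linarith
        · have : (1:ℝ) ≤ max 1 x₀ := le_max_left _ _
          simp only [ha₂_def]; linarith
      have hx₀mem : x₀ ∈ Set.Ioo a₁ a₂ := by
        constructor
        · have : min 1 x₀ ≤ x₀ := min_le_right _ _
          simp only [ha₁_def]; linarith
        · have : x₀ ≤ max 1 x₀ := le_max_right _ _
          simp only [ha₂_def]; linarith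
      have hk₀mem : k₀ ∈ Set.Ioo c₁ c₂ := by
        constructor <;> [simp only [hc₁_def]; simp only [hc₂_def]] <;> linarith
      have hQ : Set.Icc a₁ a₂ ×ˢ Set.Icc c₁ c₂ ⊆ V := by
        rintro ⟨t, k⟩ ⟨ht, hk⟩
        refine ⟨lt_of_lt_of_le ha₁pos ht.1, ?_, ?_⟩
        · have : b < c₁ := by simp only [hc₁_def]; linarith [hk₀.1]
          exact lt_of_lt_of_le this hk.1
        · have : c₂ < bbar := by simp only [hc₂_def]; linarith [hk₀.2]
          exact lt_of_le_of_lt hk.2 this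
      rw [contDiffAt_one_iff]
      refine ⟨fun w => g w • ContinuousLinearMap.fst ℝ ℝ ℝ +
          (∫ t in (1:ℝ)..w.1, fderiv ℝ g (t, w.2) (0, 1)) • ContinuousLinearMap.snd ℝ ℝ ℝ,
        Set.Ioo a₁ a₂ ×ˢ Set.Ioo c₁ c₂,
        (isOpen_Ioo.prod isOpen_Ioo).mem_nhds ⟨hx₀mem, hk₀mem⟩, ?_, ?_⟩
      · have hsub : Set.Ioo a₁ a₂ ×ˢ Set.Ioo c₁ c₂ ⊆ Set.Icc a₁ a₂ ×ˢ Set.Icc c₁ c₂ :=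
          Set.prod_mono Set.Ioo_subset_Icc_self Set.Ioo_subset_Icc_self
        refine ContinuousOn.add (ContinuousOn.fun_smul ?_ continuousOn_const)
          (ContinuousOn.fun_smul ?_ continuousOn_const)
        · exact hgC1.continuousOn.mono ((hsub.trans hQ))
        · have hgkc : ContinuousOn (fun q : ℝ × ℝ => fderiv ℝ g q (0, 1)) V :=
            (hgC1.continuousOn_fderiv_of_isOpen hVopen le_rfl).clm_apply continuousOn_const
          have := primitive_continuousOn (g := fun q : ℝ × ℝ => fderiv ℝ g q (0, 1))
            (le_trans h1mem.1 h1mem.2) (le_of_lt (lt_trans hk₀mem.1 hk₀mem.2))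
            (hgkc.mono hQ) h1mem
          exact this.mono hsub
      · rintro ⟨x, k⟩ ⟨hx, hk⟩
        exact primitive_hasFDerivAt hVopen hgC1 hQ h1mem hx hk
    have hFC1' : ContDiffOn ℝ 1 F V := fun w hw => (hFC1 w hw).contDiffWithinAt
    have hφ : ContDiffOn ℝ 1 (fun p : ℝ × ℝ => (p.1, p.2 / p.1))
        {p : ℝ × ℝ | 0 < p.1 ∧ b * p.1 < p.2 ∧ p.2 < bbar * p.1} :=
      (contDiff_fst.contDiffOn).prodMk ((contDiff_snd.contDiffOn).div
        (contDiff_fst.contDiffOn) (fun p hp => ne_of_gt hp.1))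
    have hmaps : ∀ p ∈ {p : ℝ × ℝ | 0 < p.1 ∧ b * p.1 < p.2 ∧ p.2 < bbar * p.1},
        (p.1, p.2 / p.1) ∈ V := by
      rintro ⟨R, Z⟩ ⟨hR, h1, h2⟩
      exact ⟨hR, (lt_div_iff₀ hR).2 (by linarith [mul_comm b R]),
        (div_lt_iff₀ hR).2 (by linarith [mul_comm bbar R])⟩
    have hcomp : ContDiffOn ℝ 1 (fun p : ℝ × ℝ => p.1 * F (p.1, p.2 / p.1))
        {p : ℝ × ℝ | 0 < p.1 ∧ b * p.1 < p.2 ∧ p.2 < bbar * p.1} :=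
      (contDiff_fst.contDiffOn).mul (hFC1'.comp hφ hmaps)
    exact hcomp.congr (fun p hp => hHeq p hp.1)
end

section
/- Let O ⊆ ℝ^d (d ≥ 1) be a Lebesgue measurable set of finite measure, and let (vₙ) be a sequence in L¹(O; ℝ^M) converging weakly in L¹ to v ∈ L¹(O; ℝ^M), i.e. ∫_O ⟨vₙ, g⟩ dx → ∫_O ⟨v, g⟩ dx for every bounded measurable g : O → ℝ^M. Let Φ : ℝ^M → (−∞, +∞] be lower semicontinuous and convex, and suppose each function x ↦ Φ(vₙ(x)) is integrable on O with supₙ ∫_O |Φ(vₙ(x))| dx < ∞. Then x ↦ Φ(v(x)) is integrable on O and ∫_O Φ(v(x)) dx ≤ liminf_{n→∞} ∫_O Φ(vₙ(x)) dx. -/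
open MeasureTheory Filter

variable {M : ℕ}

local notation "E" => EuclideanSpace ℝ (Fin M)

lemma epi_closed (Φ : E → EReal) (hlsc : LowerSemicontinuous Φ) :
    IsClosed {p : E × ℝ | Φ p.1 ≤ (p.2 : EReal)} := by
  rw [← isOpen_compl_iff, isOpen_iff_mem_nhds]
  rintro ⟨z, t⟩ hp
  simp only [Set.mem_compl_iff, Set.mem_setOf_eq, not_le] at hp
  obtain ⟨r, hr1, hr2⟩ := EReal.lt_iff_exists_real_btwn.1 hp
  have h1 : ∀ᶠ w in nhds z, (r : EReal) < Φ w := hlsc z r hr2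
  have h2 : Set.Iio r ∈ nhds t := Iio_mem_nhds (by exact_mod_cast hr1)
  rw [nhds_prod_eq]
  refine Filter.mem_of_superset (Filter.prod_mem_prod h1 h2) ?_
  rintro ⟨w, q⟩ ⟨hw, hq⟩
  simp only [Set.mem_compl_iff, Set.mem_setOf_eq, not_le]
  exact lt_trans (by exact_mod_cast hq) hw

lemma epi_convex (Φ : E → EReal) (hΦbot : ∀ y, Φ y ≠ ⊥)
    (hΦconv : ∀ y z : E, ∀ a c : ℝ, 0 ≤ a → 0 ≤ c →
      a + c = 1 → Φ (a • y + c • z) ≤ (a : EReal) * Φ y + (c : EReal) * Φ z) :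
    Convex ℝ {p : E × ℝ | Φ p.1 ≤ (p.2 : EReal)} := by
  rintro ⟨z₁, t₁⟩ h₁ ⟨z₂, t₂⟩ h₂ a c ha hc hac
  simp only [Set.mem_setOf_eq] at h₁ h₂ ⊢
  have := hΦconv z₁ z₂ a c ha hc hac
  refine le_trans this ?_
  have e1 : (a : EReal) * Φ z₁ ≤ (a : EReal) * (t₁ : EReal) :=
    mul_le_mul_of_nonneg_left h₁ (by exact_mod_cast ha)
  have e2 : (c : EReal) * Φ z₂ ≤ (c : EReal) * (t₂ : EReal) :=
    mul_le_mul_of_nonneg_left h₂ (by exact_mod_cast hc)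
  refine le_trans (add_le_add e1 e2) ?_
  rw [← EReal.coe_mul, ← EReal.coe_mul, ← EReal.coe_add]
  rfl

lemma sep_helper (Φ : E → EReal) (hΦbot : ∀ y, Φ y ≠ ⊥) (hlsc : LowerSemicontinuous Φ)
    (hΦconv : ∀ y z : E, ∀ a c : ℝ, 0 ≤ a → 0 ≤ c →
      a + c = 1 → Φ (a • y + c • z) ≤ (a : EReal) * Φ y + (c : EReal) * Φ z)
    (y₀ : E) (h₀ : Φ y₀ ≠ ⊤)
    (y : E) (s : ℝ) (hs : (s : EReal) < Φ y) :
    ∃ (g : E →L[ℝ] ℝ) (lam u : ℝ), 0 ≤ lam ∧ g y + s * lam < u ∧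
      ∀ (z : E) (t : ℝ), Φ z ≤ (t : EReal) → u < g z + t * lam := by
  set C := {p : E × ℝ | Φ p.1 ≤ (p.2 : EReal)} with hC
  have hCc : IsClosed C := epi_closed Φ hlsc
  have hCv : Convex ℝ C := epi_convex Φ hΦbot hΦconv
  have hys : (y, s) ∉ C := by simp only [hC, Set.mem_setOf_eq, not_le]; exact hs
  obtain ⟨f, u, hfy, hfC⟩ := geometric_hahn_banach_point_closed hCv hCc hys
  set lam := f (0, 1) with hlam
  set g : E →L[ℝ] ℝ := f.comp (ContinuousLinearMap.inl ℝ (E) ℝ) with hg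
  have hsplit : ∀ (z : E) (t : ℝ), f (z, t) = g z + t * lam := by
    intro z t
    have h1 : (z, t) = (z, (0:ℝ)) + ((0: E), t) := by simp
    have h2 : ((0 : E), t) = t • ((0 : E), (1:ℝ)) := by simp
    rw [h1, map_add, h2, f.map_smul]
    simp [hg, smul_eq_mul, hlam]
  have hlam0 : 0 ≤ lam := by
    by_contra hneg
    push_neg at hneg
    set t₀ := (Φ y₀).toReal with ht₀
    set t := max t₀ ((g y₀ - u) / (-lam)) with ht
    have hmem : (y₀, t) ∈ C := by
      simp only [hC, Set.mem_setOf_eq]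
      calc Φ y₀ = ((t₀ : ℝ) : EReal) := (EReal.coe_toReal h₀ (hΦbot y₀)).symm
        _ ≤ (t : EReal) := by exact_mod_cast le_max_left _ _
    have h1 := hfC _ hmem
    rw [hsplit] at h1
    have h2 : (g y₀ - u) / (-lam) ≤ t := le_max_right _ _
    rw [div_le_iff₀ (by linarith : (0:ℝ) < -lam)] at h2
    nlinarith
  refine ⟨g, lam, u, hlam0, ?_, ?_⟩
  · rw [← hsplit]; exact hfy
  · intro z t hzt
    have := hfC (z, t) hzt
    rwa [hsplit] at this

lemma base_minorant (Φ : E → EReal) (hΦbot : ∀ y, Φ y ≠ ⊥) (hlsc : LowerSemicontinuous Φ)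
    (hΦconv : ∀ y z : E, ∀ a c : ℝ, 0 ≤ a → 0 ≤ c →
      a + c = 1 → Φ (a • y + c • z) ≤ (a : EReal) * Φ y + (c : EReal) * Φ z)
    (y₀ : E) (h₀ : Φ y₀ ≠ ⊤) :
    ∃ (g : E →L[ℝ] ℝ) (b : ℝ), ∀ z : E, ((g z + b : ℝ) : EReal) ≤ Φ z := by
  set t₀ := (Φ y₀).toReal with ht₀
  have hΦy₀ : Φ y₀ = ((t₀ : ℝ) : EReal) := (EReal.coe_toReal h₀ (hΦbot y₀)).symm
  have hlt : ((t₀ - 1 : ℝ) : EReal) < Φ y₀ := by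
    rw [hΦy₀]; exact_mod_cast sub_one_lt t₀
  obtain ⟨g, lam, u, hlam0, hy, hC⟩ := sep_helper Φ hΦbot hlsc hΦconv y₀ h₀ y₀ (t₀ - 1) hlt
  have hlampos : 0 < lam := by
    rcases lt_or_eq_of_le hlam0 with h | h
    · exact h
    · exfalso
      have h1 := hC y₀ t₀ hΦy₀.le
      rw [← h] at h1 hy
      nlinarith
  refine ⟨(-(lam⁻¹)) • g, u / lam, fun z => ?_⟩
  by_cases hz : Φ z = ⊤
  · rw [hz]; exact le_top
  · have h1 := hC z (Φ z).toReal (EReal.coe_toReal hz (hΦbot z)).symm.le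
    have h2 : (-(lam⁻¹)) • g z + u / lam < (Φ z).toReal := by
      have : u / lam - g z / lam < (Φ z).toReal := by
        rw [div_sub_div_same, div_lt_iff₀ hlampos]; nlinarith
      calc (-(lam⁻¹)) • g z + u / lam = u / lam - g z / lam := by
            simp [smul_eq_mul]; ring
        _ < _ := this
    rw [← EReal.coe_toReal hz (hΦbot z)]
    exact_mod_cast h2.le

lemma main_minorant (Φ : E → EReal) (hΦbot : ∀ y, Φ y ≠ ⊥) (hlsc : LowerSemicontinuous Φ)
    (hΦconv : ∀ y z : E, ∀ a c : ℝ, 0 ≤ a → 0 ≤ c →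
      a + c = 1 → Φ (a • y + c • z) ≤ (a : EReal) * Φ y + (c : EReal) * Φ z)
    (y₀ : E) (h₀ : Φ y₀ ≠ ⊤)
    (y : E) (s : ℝ) (hs : (s : EReal) < Φ y) :
    ∃ (g : E →L[ℝ] ℝ) (b : ℝ), (∀ z : E, ((g z + b : ℝ) : EReal) ≤ Φ z) ∧ s < g y + b := by
  obtain ⟨g, lam, u, hlam0, hy, hC⟩ := sep_helper Φ hΦbot hlsc hΦconv y₀ h₀ y s hs
  rcases lt_or_eq_of_le hlam0 with hpos | hzero
  · refine ⟨(-(lam⁻¹)) • g, u / lam, fun z => ?_, ?_⟩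
    · by_cases hz : Φ z = ⊤
      · rw [hz]; exact le_top
      · have h1 := hC z (Φ z).toReal (EReal.coe_toReal hz (hΦbot z)).symm.le
        have h2 : (-(lam⁻¹)) • g z + u / lam < (Φ z).toReal := by
          have : u / lam - g z / lam < (Φ z).toReal := by
            rw [div_sub_div_same, div_lt_iff₀ hpos]; nlinarith
          calc (-(lam⁻¹)) • g z + u / lam = u / lam - g z / lam := by
                simp [smul_eq_mul]; ring
            _ < _ := this
        rw [← EReal.coe_toReal hz (hΦbot z)]
        exact_mod_cast h2.le
    · have : s < u / lam - g y / lam := by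
        rw [div_sub_div_same, lt_div_iff₀ hpos]; nlinarith
      calc s < u / lam - g y / lam := this
        _ = (-(lam⁻¹)) • g y + u / lam := by simp [smul_eq_mul]; ring
  · -- lam = 0
    obtain ⟨g₀, b₀, hmin₀⟩ := base_minorant Φ hΦbot hlsc hΦconv y₀ h₀
    rw [← hzero] at hy hC
    simp only [mul_zero, add_zero] at hy hC
    -- hy : g y < u, hC : ∀ z t, Φ z ≤ t → u < g z
    have hyu : 0 < u - g y := by linarith
    set c := max 0 ((s + 1 - (g₀ y + b₀)) / (u - g y)) with hc
    have hc0 : 0 ≤ c := le_max_left _ _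
    refine ⟨g₀ + (-c) • g, b₀ + c * u, fun z => ?_, ?_⟩
    · by_cases hz : Φ z = ⊤
      · rw [hz]; exact le_top
      · have h1 := hC z (Φ z).toReal (EReal.coe_toReal hz (hΦbot z)).symm.le
        have h2 : (g₀ + (-c) • g) z + (b₀ + c * u) ≤ g₀ z + b₀ := by
          simp only [ContinuousLinearMap.add_apply, ContinuousLinearMap.smul_apply,
            smul_eq_mul]
          nlinarith
        calc ((((g₀ + (-c) • g) z + (b₀ + c * u)) : ℝ) : EReal)
            ≤ ((g₀ z + b₀ : ℝ) : EReal) := by exact_mod_cast h2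
          _ ≤ Φ z := hmin₀ z
    · have h3 : (s + 1 - (g₀ y + b₀)) / (u - g y) ≤ c := le_max_right _ _
      rw [div_le_iff₀ hyu] at h3
      simp only [ContinuousLinearMap.add_apply, ContinuousLinearMap.smul_apply, smul_eq_mul]
      nlinarith

lemma clm_to_vec (g : E →L[ℝ] ℝ) :
    ∃ a : E, ∀ z : E, g z = ∑ i, z i * a i := by
  refine ⟨(WithLp.equiv 2 (Fin M → ℝ)).symm (fun i => g (EuclideanSpace.single i 1)),
    fun z => ?_⟩
  have hz : z = ∑ i, z i • EuclideanSpace.single i (1:ℝ) := by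
    ext j
    rw [WithLp.ofLp_sum, Fintype.sum_apply]
    simp [EuclideanSpace.single_apply]
  conv_lhs => rw [hz]
  rw [map_sum]
  simp [smul_eq_mul]

lemma countable_minorants (Φ : E → EReal) (hΦbot : ∀ y, Φ y ≠ ⊥)
    (hlsc : LowerSemicontinuous Φ)
    (hΦconv : ∀ y z : E, ∀ a c : ℝ, 0 ≤ a → 0 ≤ c →
      a + c = 1 → Φ (a • y + c • z) ≤ (a : EReal) * Φ y + (c : EReal) * Φ z)
    (y₀ : E) (h₀ : Φ y₀ ≠ ⊤) :
    ∃ (A : ℕ → E) (B : ℕ → ℝ),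
      (∀ k, ∀ z : E, ((∑ i, z i * A k i + B k : ℝ) : EReal) ≤ Φ z) ∧
      ∀ (y : E) (s : ℝ), (s : EReal) < Φ y → ∃ k, s < ∑ i, y i * A k i + B k := by
  set S : Set ((E) × ℝ) :=
    {p | ∀ z : E, ((∑ i, z i * p.1 i + p.2 : ℝ) : EReal) ≤ Φ z} with hS
  have hSne : S.Nonempty := by
    obtain ⟨g, b, hmin⟩ := base_minorant Φ hΦbot hlsc hΦconv y₀ h₀
    obtain ⟨a, ha⟩ := clm_to_vec g
    exact ⟨(a, b), fun z => by rw [← ha z]; exact hmin z⟩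
  haveI : Nonempty ↥S := hSne.to_subtype
  obtain ⟨u, huc, hud⟩ := TopologicalSpace.exists_countable_dense ↥S
  have hune : u.Nonempty := hud.nonempty
  set T : Set ((E) × ℝ) := Subtype.val '' u with hT
  have hTc : T.Countable := huc.image _
  have hTS : T ⊆ S := by rintro p ⟨q, hq, rfl⟩; exact q.2
  obtain ⟨f, hf⟩ := hTc.exists_eq_range (hune.image _)
  refine ⟨fun k => (f k).1, fun k => (f k).2, ?_, ?_⟩
  · intro k z
    have : f k ∈ T := by rw [hf]; exact Set.mem_range_self k
    exact hTS this z
  · intro y s hs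
    obtain ⟨g, b, hmin, hval⟩ := main_minorant Φ hΦbot hlsc hΦconv y₀ h₀ y s hs
    obtain ⟨a, ha⟩ := clm_to_vec g
    have hpS : (a, b) ∈ S := fun z => by rw [← ha z]; exact hmin z
    have hpcl : (a, b) ∈ closure T := by
      have h1 : (⟨(a, b), hpS⟩ : ↥S) ∈ closure u := hud _
      exact closure_subtype.1 h1
    set U : Set ((E) × ℝ) := {q | s < ∑ i, y i * q.1 i + q.2} with hU
    have hUopen : IsOpen U := by
      have hcont : Continuous fun q : (E) × ℝ => ∑ i, y i * q.1 i + q.2 :=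
        by fun_prop
      exact isOpen_lt continuous_const hcont
    have hpU : (a, b) ∈ U := by simpa [hU] using (ha y ▸ hval)
    obtain ⟨q, hqU, hqT⟩ := mem_closure_iff.1 hpcl U hUopen hpU
    rw [hf] at hqT
    obtain ⟨k, rfl⟩ := hqT
    exact ⟨k, hqU⟩

def mseq {α : Type*} (ℓ : ℕ → α → ℝ) : ℕ → α → ℝ
  | 0 => ℓ 0
  | K+1 => fun y => max (mseq ℓ K y) (ℓ (K+1) y)

noncomputable def selseq {α : Type*} (ℓ : ℕ → α → ℝ) : ℕ → α → ℕ
  | 0 => fun _ => 0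
  | K+1 => {y | mseq ℓ K y < ℓ (K+1) y}.piecewise (fun _ => K+1) (selseq ℓ K)

variable {α : Type*} {ℓ : ℕ → α → ℝ}

lemma selseq_zero (y : α) : selseq ℓ 0 y = 0 := rfl
lemma selseq_succ (K : ℕ) (y : α) :
    selseq ℓ (K+1) y = if mseq ℓ K y < ℓ (K+1) y then K+1 else selseq ℓ K y := by
  rw [selseq, Set.piecewise]
  congr

lemma selseq_le (K : ℕ) (y : α) : selseq ℓ K y ≤ K := by
  induction K with
  | zero => simp [selseq_zero]
  | succ K ih =>
    rw [selseq_succ]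
    split
    · exact le_rfl
    · exact ih.trans (Nat.le_succ K)

lemma mseq_sel (K : ℕ) (y : α) : ℓ (selseq ℓ K y) y = mseq ℓ K y := by
  induction K with
  | zero => rfl
  | succ K ih =>
    rw [selseq_succ]
    by_cases h : mseq ℓ K y < ℓ (K+1) y
    · rw [if_pos h]
      simp [mseq, max_eq_right h.le]
    · rw [if_neg h]
      rw [ih]
      simp [mseq, max_eq_left (not_lt.1 h)]

lemma mseq_mono (y : α) : Monotone fun K => mseq ℓ K y :=
  monotone_nat_of_le_succ fun _ => le_max_left _ _

lemma le_mseq {k K : ℕ} (hk : k ≤ K) (y : α) : ℓ k y ≤ mseq ℓ K y := by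
  induction K with
  | zero => simp_all [mseq, Nat.le_zero.1 hk]
  | succ K ih =>
    rcases Nat.le_succ_iff_eq_or_le.1 hk with rfl | h
    · exact le_max_right _ _
    · exact le_trans (ih h) (le_max_left _ _)

lemma mseq_le {K : ℕ} {y : α} {c : ℝ} (h : ∀ k ≤ K, ℓ k y ≤ c) : mseq ℓ K y ≤ c := by
  induction K with
  | zero => exact h 0 le_rfl
  | succ K ih =>
    exact max_le (ih fun k hk => h k (hk.trans (Nat.le_succ K))) (h (K+1) le_rfl)

lemma mseq_measurable [MeasurableSpace α] (hℓ : ∀ k, Measurable (ℓ k)) (K : ℕ) :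
    Measurable (mseq ℓ K) := by
  induction K with
  | zero => exact hℓ 0
  | succ K ih => exact ih.max (hℓ (K+1))

lemma selseq_measurable [MeasurableSpace α] (hℓ : ∀ k, Measurable (ℓ k)) (K : ℕ) :
    Measurable (selseq ℓ K) := by
  induction K with
  | zero => exact measurable_const
  | succ K ih =>
    rw [selseq]
    exact Measurable.piecewise (measurableSet_lt (mseq_measurable hℓ K) (hℓ (K+1)))
      measurable_const ih

/-- Weak lower semicontinuity of convex integral
functionals: if `vₙ ⇀ v` weakly in `L¹(O; ℝ^M)` (`O ⊆ ℝ^d` measurable of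
finite measure), `Φ : ℝ^M → (−∞,∞]` is convex and lower semicontinuous, and
`Φ(vₙ)` is integrable (with representative `φₙ`) with bounded `L¹` norms,
then `Φ(v)` is integrable and `∫ Φ(v) ≤ liminf ∫ Φ(vₙ)`. -/
theorem stmt_10
    (d M : ℕ) (hd : 1 ≤ d) (hM : 1 ≤ M)
    (O : Set (Fin d → ℝ)) (hOmeas : MeasurableSet O) (hOfin : volume O < ⊤)
    (v : ℕ → (Fin d → ℝ) → EuclideanSpace ℝ (Fin M))
    (vlim : (Fin d → ℝ) → EuclideanSpace ℝ (Fin M))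
    (hvint : ∀ n, IntegrableOn (v n) O volume)
    (hvlimint : IntegrableOn vlim O volume)
    (hweak : ∀ g : (Fin d → ℝ) → EuclideanSpace ℝ (Fin M), Measurable g →
      (∃ Cg : ℝ, ∀ x, ‖g x‖ ≤ Cg) →
      Tendsto (fun n => ∫ x in O, ∑ i, v n x i * g x i) atTop
        (nhds (∫ x in O, ∑ i, vlim x i * g x i)))
    (Φ : EuclideanSpace ℝ (Fin M) → EReal)
    (hΦbot : ∀ y, Φ y ≠ ⊥)
    (hΦlsc : LowerSemicontinuous Φ)
    (hΦconv : ∀ y z : EuclideanSpace ℝ (Fin M), ∀ a c : ℝ, 0 ≤ a → 0 ≤ c →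
      a + c = 1 → Φ (a • y + c • z) ≤ (a : EReal) * Φ y + (c : EReal) * Φ z)
    (φ : ℕ → (Fin d → ℝ) → ℝ)
    (hφ : ∀ n, ∀ᵐ x ∂(volume.restrict O), (φ n x : EReal) = Φ (v n x))
    (hφint : ∀ n, IntegrableOn (φ n) O volume)
    (hφbdd : ∃ Cφ : ℝ, ∀ n, (∫ x in O, |φ n x|) ≤ Cφ) :
    (∀ᵐ x ∂(volume.restrict O), Φ (vlim x) ≠ ⊤) ∧
    IntegrableOn (fun x => (Φ (vlim x)).toReal) O volume ∧
    (∫ x in O, (Φ (vlim x)).toReal) ≤ liminf (fun n => ∫ x in O, φ n x) atTop := by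
  classical
  by_cases hO0 : volume O = 0
  · have hμ : volume.restrict O = 0 := Measure.restrict_eq_zero.2 hO0
    refine ⟨by rw [hμ]; simp, ?_, ?_⟩
    · unfold IntegrableOn
      rw [hμ]
      exact integrable_zero_measure
    · have h1 : (∫ x in O, (Φ (vlim x)).toReal) = 0 := by
        rw [hμ, integral_zero_measure]
      have h2 : ∀ n, (∫ x in O, φ n x) = 0 := fun n => by
        rw [hμ, integral_zero_measure]
      rw [h1]
      simp only [h2]
      rw [liminf_const]
  · -- main case: O has positive measure
    haveI : IsFiniteMeasure (volume.restrict O) :=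
      ⟨by rw [Measure.restrict_apply_univ]; exact hOfin⟩
    have hμ0 : volume.restrict O ≠ 0 := fun h => hO0 (Measure.restrict_eq_zero.1 h)
    haveI : (MeasureTheory.ae (volume.restrict O)).NeBot := ae_neBot.2 hμ0
    obtain ⟨x₀, hx₀⟩ := (hφ 0).exists
    have h₀ : Φ (v 0 x₀) ≠ ⊤ := by rw [← hx₀]; exact EReal.coe_ne_top _
    obtain ⟨A, B, hmin, hsup⟩ := countable_minorants Φ hΦbot hΦlsc hΦconv _ h₀
    set ℓ : ℕ → EuclideanSpace ℝ (Fin M) → ℝ := fun k y => ∑ i, y i * A k i + B k with hℓ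
    have hℓmeas : ∀ k, Measurable (ℓ k) := fun k =>
      (by show Continuous (fun y : EuclideanSpace ℝ (Fin M) => ∑ i, y i * A k i + B k); fun_prop : Continuous (ℓ k)).measurable
    have hvsm := hvlimint.aestronglyMeasurable
    set w := hvsm.mk vlim with hwdef
    have hwmeas : Measurable w := hvsm.stronglyMeasurable_mk.measurable
    have hwae : vlim =ᵐ[volume.restrict O] w := hvsm.ae_eq_mk
    set L := liminf (fun n => ∫ x in O, φ n x) atTop with hLdef
    obtain ⟨Cφ, hCφ⟩ := hφbdd
    have hφlb : ∀ n, -Cφ ≤ ∫ x in O, φ n x := fun n => by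
      have h1 : |∫ x in O, φ n x| ≤ ∫ x in O, |φ n x| := by
        simpa [Real.norm_eq_abs] using
          norm_integral_le_integral_norm (μ := volume.restrict O) (φ n)
      have := (abs_le.1 (h1.trans (hCφ n))).1
      linarith
    have hφub : ∀ n, (∫ x in O, φ n x) ≤ Cφ := fun n => by
      have h1 : |∫ x in O, φ n x| ≤ ∫ x in O, |φ n x| := by
        simpa [Real.norm_eq_abs] using
          norm_integral_le_integral_norm (μ := volume.restrict O) (φ n)
      linarith [(abs_le.1 (h1.trans (hCφ n))).2]
    have hφbddunder : IsBoundedUnder (· ≥ ·) atTop (fun n => ∫ x in O, φ n x) :=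
      ⟨-Cφ, eventually_map.2 (Eventually.of_forall hφlb)⟩
    have hφbddabove : IsBoundedUnder (· ≤ ·) atTop (fun n => ∫ x in O, φ n x) :=
      ⟨Cφ, eventually_map.2 (Eventually.of_forall hφub)⟩
    have hsum_eq : ∀ u gg : EuclideanSpace ℝ (Fin M),
        ∑ i, u i * gg i = (inner ℝ u gg : ℝ) := by
      intro u gg
      rw [PiLp.inner_apply]
      simp [RCLike.inner_apply, conj_trivial, mul_comm]
    have claim1 : ∀ K : ℕ, IntegrableOn (fun x => mseq ℓ K (w x)) O volume ∧
        (∫ x in O, mseq ℓ K (w x)) ≤ L := by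
      intro K
      set g : (Fin d → ℝ) → EuclideanSpace ℝ (Fin M) :=
        fun x => A (selseq ℓ K (w x)) with hgdef
      set bb : (Fin d → ℝ) → ℝ := fun x => B (selseq ℓ K (w x)) with hbbdef
      have hselmeas : Measurable fun x => selseq ℓ K (w x) :=
        (selseq_measurable hℓmeas K).comp hwmeas
      have hgmeas : Measurable g := measurable_from_nat.comp hselmeas
      have hbbmeas : Measurable bb := measurable_from_nat.comp hselmeas
      set CA := (Finset.range (K+1)).sup' Finset.nonempty_range_add_one (fun k => ‖A k‖) with hCA
      have hgbd : ∀ x, ‖g x‖ ≤ CA := fun x =>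
        Finset.le_sup' (fun k => ‖A k‖) (Finset.mem_range_succ_iff.2 (selseq_le K (w x)))
      set CB := (Finset.range (K+1)).sup' Finset.nonempty_range_add_one (fun k => |B k|) with hCB
      have hbbd : ∀ x, |bb x| ≤ CB := fun x =>
        Finset.le_sup' (fun k => |B k|) (Finset.mem_range_succ_iff.2 (selseq_le K (w x)))
      have hbbint : IntegrableOn bb O volume := by
        refine Integrable.mono' (integrable_const CB) hbbmeas.aestronglyMeasurable ?_
        exact Eventually.of_forall fun x => by simpa using hbbd x
      have hinner_int : ∀ u : (Fin d → ℝ) → EuclideanSpace ℝ (Fin M),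
          IntegrableOn u O volume →
          IntegrableOn (fun x => ∑ i, u x i * g x i) O volume := by
        intro u hu
        have hsm : AEStronglyMeasurable (fun x => ∑ i, u x i * g x i)
            (volume.restrict O) := by
          apply Finset.aestronglyMeasurable_fun_sum
          intro i _
          exact ((by fun_prop : Continuous fun y : EuclideanSpace ℝ (Fin M) => y i).comp_aestronglyMeasurable hu.aestronglyMeasurable).mul
            (((by fun_prop : Continuous fun y : EuclideanSpace ℝ (Fin M) => y i).measurable.comp hgmeas).aestronglyMeasurable)
        refine Integrable.mono' (hu.norm.const_mul CA) hsm
          (Eventually.of_forall fun x => ?_)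
        rw [hsum_eq]
        calc ‖(inner ℝ (u x) (g x) : ℝ)‖ = |(inner ℝ (u x) (g x) : ℝ)| := Real.norm_eq_abs _
          _ ≤ ‖u x‖ * ‖g x‖ := abs_real_inner_le_norm _ _
          _ ≤ ‖u x‖ * CA := mul_le_mul_of_nonneg_left (hgbd x) (norm_nonneg _)
          _ = CA * ‖u x‖ := mul_comm _ _
      have key : ∀ n, (∫ x in O, ∑ i, v n x i * g x i) + (∫ x in O, bb x) ≤
          ∫ x in O, φ n x := by
        intro n
        have hint1 := hinner_int (v n) (hvint n)
        have hae : ∀ᵐ x ∂(volume.restrict O),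
            (∑ i, v n x i * g x i) + bb x ≤ φ n x := by
          filter_upwards [hφ n] with x hx
          have h1 : ((ℓ (selseq ℓ K (w x)) (v n x) : ℝ) : EReal) ≤ Φ (v n x) := hmin _ _
          rw [← hx] at h1
          have h2 : ℓ (selseq ℓ K (w x)) (v n x) ≤ φ n x := by exact_mod_cast h1
          simpa [hℓ, hgdef, hbbdef] using h2
        calc (∫ x in O, ∑ i, v n x i * g x i) + (∫ x in O, bb x)
            = ∫ x in O, ((∑ i, v n x i * g x i) + bb x) := (integral_add hint1 hbbint).symm
          _ ≤ ∫ x in O, φ n x := integral_mono_ae (hint1.add hbbint) (hφint n) hae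
      have htend := hweak g hgmeas ⟨CA, hgbd⟩
      have htend' : Tendsto
          (fun n => (∫ x in O, ∑ i, v n x i * g x i) + ∫ x in O, bb x) atTop
          (nhds ((∫ x in O, ∑ i, vlim x i * g x i) + ∫ x in O, bb x)) :=
        htend.add_const _
      have hle : (∫ x in O, ∑ i, vlim x i * g x i) + (∫ x in O, bb x) ≤ L := by
        rw [hLdef, ← htend'.liminf_eq]
        exact liminf_le_liminf (Eventually.of_forall key)
          htend'.isBoundedUnder_ge hφbddabove.isCoboundedUnder_ge
      have haem : (fun x => mseq ℓ K (w x)) =ᵐ[volume.restrict O]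
          fun x => (∑ i, vlim x i * g x i) + bb x := by
        filter_upwards [hwae] with x hx
        show mseq ℓ K (w x) = (∑ i, vlim x i * g x i) + bb x
        rw [hx, ← mseq_sel K (w x)]
      have hintv := hinner_int vlim hvlimint
      refine ⟨(hintv.add hbbint).congr haem.symm, ?_⟩
      rw [integral_congr_ae haem, integral_add hintv hbbint]
      exact hle
    -- Claim 2: monotone convergence
    set I₀ := ∫ x in O, mseq ℓ 0 (w x) with hI₀def
    have hI₀L : I₀ ≤ L := (claim1 0).2
    set uu : ℕ → (Fin d → ℝ) → ENNReal :=
      fun K x => ENNReal.ofReal (mseq ℓ K (w x) - mseq ℓ 0 (w x)) with huudef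
    have huumeas : ∀ K, Measurable (uu K) := fun K =>
      ENNReal.measurable_ofReal.comp
        (((mseq_measurable hℓmeas K).comp hwmeas).sub
          ((mseq_measurable hℓmeas 0).comp hwmeas))
    have huumono : Monotone uu := fun K K' hK x =>
      ENNReal.ofReal_le_ofReal (sub_le_sub_right (mseq_mono (w x) hK) _)
    have huuint : ∀ K, (∫⁻ x in O, uu K x) ≤ ENNReal.ofReal (L - I₀) := by
      intro K
      have hsub : IntegrableOn (fun x => mseq ℓ K (w x) - mseq ℓ 0 (w x)) O volume :=
        (claim1 K).1.sub (claim1 0).1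
      have h0le : 0 ≤ᵐ[volume.restrict O]
          fun x => mseq ℓ K (w x) - mseq ℓ 0 (w x) :=
        Eventually.of_forall fun x => sub_nonneg.2 (mseq_mono (w x) (Nat.zero_le K))
      rw [huudef, ← ofReal_integral_eq_lintegral_ofReal hsub h0le]
      apply ENNReal.ofReal_le_ofReal
      rw [integral_sub (claim1 K).1 (claim1 0).1]
      have := (claim1 K).2
      rw [← hI₀def]
      linarith
    set G : (Fin d → ℝ) → ENNReal := fun x => ⨆ K, uu K x with hGdef
    have hGmeas : Measurable G := Measurable.iSup huumeas
    have hGint : (∫⁻ x in O, G x) ≤ ENNReal.ofReal (L - I₀) := by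
      rw [hGdef]
      rw [lintegral_iSup huumeas huumono]
      exact iSup_le huuint
    have hGne : (∫⁻ x in O, G x) ≠ ⊤ :=
      (lt_of_le_of_lt hGint ENNReal.ofReal_lt_top).ne
    have hGlt : ∀ᵐ x ∂(volume.restrict O), G x < ⊤ := ae_lt_top hGmeas hGne
    have hkey : ∀ᵐ x ∂(volume.restrict O), Φ (vlim x) ≠ ⊤ ∧
        (Φ (vlim x)).toReal = mseq ℓ 0 (w x) + (G x).toReal := by
      filter_upwards [hwae, hGlt] with x hx hGx
      have hstep : ∀ s : ℝ, (s : EReal) < Φ (vlim x) →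
          ∃ k, s < mseq ℓ k (w x) := by
        intro s hs
        obtain ⟨k, hk⟩ := hsup (vlim x) s hs
        refine ⟨k, lt_of_lt_of_le ?_ (le_mseq le_rfl (w x))⟩
        rw [← hx]
        exact hk
      have hne : Φ (vlim x) ≠ ⊤ := by
        intro htop
        have hs : ((mseq ℓ 0 (w x) + (G x).toReal : ℝ) : EReal) < Φ (vlim x) := by
          rw [htop]; exact EReal.coe_lt_top _
        obtain ⟨k, hk⟩ := hstep _ hs
        have h1 : G x < uu k x := by
          rw [huudef]
          rw [ENNReal.lt_ofReal_iff_toReal_lt hGx.ne]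
          linarith
        exact absurd (le_iSup (fun K => uu K x) k) h1.not_ge
      refine ⟨hne, ?_⟩
      have hub : ∀ K, mseq ℓ K (w x) ≤ (Φ (vlim x)).toReal := by
        intro K
        apply mseq_le
        intro k _
        have h1 := hmin k (vlim x)
        rw [← EReal.coe_toReal hne (hΦbot _)] at h1
        have h2 : ℓ k (vlim x) ≤ (Φ (vlim x)).toReal := by exact_mod_cast h1
        rw [← hx]
        exact h2
      have hle1 : (G x).toReal ≤ (Φ (vlim x)).toReal - mseq ℓ 0 (w x) := by
        have h1 : G x ≤ ENNReal.ofReal ((Φ (vlim x)).toReal - mseq ℓ 0 (w x)) :=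
          iSup_le fun K => ENNReal.ofReal_le_ofReal (by linarith [hub K])
        have h2 := ENNReal.toReal_mono ENNReal.ofReal_ne_top h1
        rwa [ENNReal.toReal_ofReal (by linarith [hub 0])] at h2
      have hle2 : (Φ (vlim x)).toReal - mseq ℓ 0 (w x) ≤ (G x).toReal := by
        by_contra hcon
        push_neg at hcon
        have hs : ((mseq ℓ 0 (w x) + (G x).toReal : ℝ) : EReal) < Φ (vlim x) := by
          rw [← EReal.coe_toReal hne (hΦbot _)]
          exact_mod_cast by linarith
        obtain ⟨k, hk⟩ := hstep _ hs
        have h1 : G x < uu k x := by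
          rw [huudef]
          rw [ENNReal.lt_ofReal_iff_toReal_lt hGx.ne]
          linarith
        exact absurd (le_iSup (fun K => uu K x) k) h1.not_ge
      linarith
    have hGtoRealint : Integrable (fun x => (G x).toReal) (volume.restrict O) :=
      integrable_toReal_of_lintegral_ne_top hGmeas.aemeasurable hGne
    have hFeq : (fun x => (Φ (vlim x)).toReal) =ᵐ[volume.restrict O]
        fun x => mseq ℓ 0 (w x) + (G x).toReal := hkey.mono fun x h => h.2
    have hFint : IntegrableOn (fun x => (Φ (vlim x)).toReal) O volume :=
      ((claim1 0).1.add hGtoRealint).congr hFeq.symm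
    refine ⟨hkey.mono fun x h => h.1, hFint, ?_⟩
    rw [integral_congr_ae hFeq, integral_add (claim1 0).1 hGtoRealint]
    have h2 : (∫ x in O, (G x).toReal) = (∫⁻ x in O, G x).toReal :=
      integral_toReal hGmeas.aemeasurable hGlt
    have h3 : (∫⁻ x in O, G x).toReal ≤ L - I₀ := by
      have := ENNReal.toReal_mono ENNReal.ofReal_ne_top hGint
      rwa [ENNReal.toReal_ofReal (by linarith)] at this
    rw [← hI₀def, hLdef] at *
    rw [h2]
    linarith [h3]
end
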